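/- arXiv:0805.4120 — 3 statements merged into one kernel-verified Lean document; each statement's English description precedes it below -/
import Mathlib

section
/- Every Laman graph on n ≥ 3 vertices has exactly 2n−3 edges, and after removing one fixed edge [v_1,v_2], the remaining edges can be oriented so that every vertex other than v_1 and v_2 has in-degree exactly 2, and v_1, v_2 have in-degree 0. -/
open scoped Classical

/-- Laman graphs, defined via the Henneberg construction: graphs (given by a
vertex set `V ⊆ ℕ` and an edge set `E` of unordered pairs) obtainable from a
triangle by Henneberg I and Henneberg II steps. -/
inductive Henneberg : Finset ℕ → Finset (Sym2 ℕ) → Prop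
  | triangle (a b c : ℕ) (hab : a ≠ b) (hac : a ≠ c) (hbc : b ≠ c) :
      Henneberg {a, b, c} {s(a, b), s(b, c), s(a, c)}
  | stepI (V : Finset ℕ) (E : Finset (Sym2 ℕ)) (hVE : Henneberg V E)
      (v u w : ℕ) (hv : v ∉ V) (hu : u ∈ V) (hw : w ∈ V) (huw : u ≠ w) :
      Henneberg (insert v V) (insert s(v, u) (insert s(v, w) E))
  | stepII (V : Finset ℕ) (E : Finset (Sym2 ℕ)) (hVE : Henneberg V E)
      (v a b c : ℕ) (hv : v ∉ V) (ha : a ∈ V) (hb : b ∈ V) (hc : c ∈ V)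
      (hab : a ≠ b) (hac : a ≠ c) (hbc : b ≠ c) (he : s(a, b) ∈ E) :
      Henneberg (insert v V) (insert s(v, a) (insert s(v, b) (insert s(v, c) (E.erase s(a, b)))))

/-! ### Auxiliary material -/

/-- The two-element finset underlying an unordered pair. -/
def Sym2.pairFinset : Sym2 ℕ → Finset ℕ :=
  Sym2.lift ⟨fun x y => ({x, y} : Finset ℕ), fun x y => Finset.pair_comm x y⟩

@[simp] lemma Sym2.mem_pairFinset (x : ℕ) (z : Sym2 ℕ) :
    x ∈ Sym2.pairFinset z ↔ x ∈ z := by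
  induction z using Sym2.ind with
  | _ a b => simp [Sym2.pairFinset, Sym2.mem_iff]

/-- The set of edges spanned by a vertex set `T`. -/
noncomputable def spans (E₀ : Finset (Sym2 ℕ)) (T : Finset ℕ) : Finset (Sym2 ℕ) :=
  E₀.filter (fun z => ∀ x ∈ z, x ∈ T)

lemma mem_spans {E₀ : Finset (Sym2 ℕ)} {T : Finset ℕ} {z : Sym2 ℕ} :
    z ∈ spans E₀ T ↔ z ∈ E₀ ∧ ∀ x ∈ z, x ∈ T := Finset.mem_filter

lemma henneberg_mem {V : Finset ℕ} {E : Finset (Sym2 ℕ)} (h : Henneberg V E) :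
    ∀ z ∈ E, ∀ x ∈ z, x ∈ V := by
  induction h with
  | triangle a b c hab hac hbc =>
    intro z hz x hx
    simp only [Finset.mem_insert, Finset.mem_singleton] at hz
    rcases hz with rfl | rfl | rfl <;> rw [Sym2.mem_iff] at hx <;>
      rcases hx with rfl | rfl <;> simp
  | stepI V E hVE v u w hv hu hw huw ih =>
    intro z hz x hx
    simp only [Finset.mem_insert] at hz
    rcases hz with rfl | rfl | hz
    · rw [Sym2.mem_iff] at hx; rcases hx with rfl | rfl <;> simp [hu]
    · rw [Sym2.mem_iff] at hx; rcases hx with rfl | rfl <;> simp [hw]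
    · exact Finset.mem_insert_of_mem (ih z hz x hx)
  | stepII V E hVE v a b c hv ha hb hc hab hac hbc he ih =>
    intro z hz x hx
    simp only [Finset.mem_insert] at hz
    rcases hz with rfl | rfl | rfl | hz
    · rw [Sym2.mem_iff] at hx; rcases hx with rfl | rfl <;> simp [ha]
    · rw [Sym2.mem_iff] at hx; rcases hx with rfl | rfl <;> simp [hb]
    · rw [Sym2.mem_iff] at hx; rcases hx with rfl | rfl <;> simp [hc]
    · exact Finset.mem_insert_of_mem (ih z (Finset.mem_of_mem_erase hz) x hx)

lemma henneberg_nondiag {V : Finset ℕ} {E : Finset (Sym2 ℕ)} (h : Henneberg V E) :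
    ∀ z ∈ E, ¬ z.IsDiag := by
  induction h with
  | triangle a b c hab hac hbc =>
    intro z hz
    simp only [Finset.mem_insert, Finset.mem_singleton] at hz
    rcases hz with rfl | rfl | rfl <;> rw [Sym2.mk_isDiag_iff] <;> assumption
  | stepI V E hVE v u w hv hu hw huw ih =>
    intro z hz
    simp only [Finset.mem_insert] at hz
    rcases hz with rfl | rfl | hz
    · rw [Sym2.mk_isDiag_iff]; rintro rfl; exact hv hu
    · rw [Sym2.mk_isDiag_iff]; rintro rfl; exact hv hw
    · exact ih z hz
  | stepII V E hVE v a b c hv ha hb hc hab hac hbc he ih =>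
    intro z hz
    simp only [Finset.mem_insert] at hz
    rcases hz with rfl | rfl | rfl | hz
    · rw [Sym2.mk_isDiag_iff]; rintro rfl; exact hv ha
    · rw [Sym2.mk_isDiag_iff]; rintro rfl; exact hv hb
    · rw [Sym2.mk_isDiag_iff]; rintro rfl; exact hv hc
    · exact ih z (Finset.mem_of_mem_erase hz)

lemma henneberg_card {V : Finset ℕ} {E : Finset (Sym2 ℕ)} (h : Henneberg V E) :
    3 ≤ V.card ∧ E.card = 2 * V.card - 3 := by
  induction h with
  | triangle a b c hab hac hbc =>
    have hV : ({a, b, c} : Finset ℕ).card = 3 := by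
      rw [Finset.card_insert_of_notMem (by simp [hab, hac]),
        Finset.card_insert_of_notMem (by simp (config := {}) [hbc]), Finset.card_singleton]
    have h1 : s(a, b) ≠ s(b, c) := by
      intro h'; rw [Sym2.eq_iff] at h'; tauto
    have h2 : s(a, b) ≠ s(a, c) := by
      intro h'; rw [Sym2.eq_iff] at h'; tauto
    have h3 : s(b, c) ≠ s(a, c) := by
      intro h'; rw [Sym2.eq_iff] at h'; tauto
    have hE : ({s(a, b), s(b, c), s(a, c)} : Finset (Sym2 ℕ)).card = 3 := by
      rw [Finset.card_insert_of_notMem (by simp [h1, h2]),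
        Finset.card_insert_of_notMem (by simp [h3]), Finset.card_singleton]
    rw [hV, hE]
    omega
  | stepI V E hVE v u w hv hu hw huw ih =>
    obtain ⟨ihV, ihE⟩ := ih
    have hvu : v ≠ u := fun h' => hv (h' ▸ hu)
    have hvw : v ≠ w := fun h' => hv (h' ▸ hw)
    have h1 : s(v, u) ≠ s(v, w) := by
      intro h'; rw [Sym2.eq_iff] at h'; tauto
    have h2 : s(v, u) ∉ E := fun h' => hv (henneberg_mem hVE _ h' v (by simp))
    have h3 : s(v, w) ∉ E := fun h' => hv (henneberg_mem hVE _ h' v (by simp))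
    have hV : (insert v V).card = V.card + 1 := Finset.card_insert_of_notMem hv
    have hE : (insert s(v, u) (insert s(v, w) E)).card = E.card + 2 := by
      rw [Finset.card_insert_of_notMem (by simp [h1, h2]),
        Finset.card_insert_of_notMem h3]
    rw [hV, hE]
    omega
  | stepII V E hVE v a b c hv ha hb hc hab hac hbc he ih =>
    obtain ⟨ihV, ihE⟩ := ih
    have h1 : s(v, a) ≠ s(v, b) := by
      intro h'; rw [Sym2.eq_iff] at h'
      rcases h' with ⟨_, h'⟩ | ⟨h', _⟩
      · exact hab h'
      · exact hv (h' ▸ hb)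
    have h2 : s(v, a) ≠ s(v, c) := by
      intro h'; rw [Sym2.eq_iff] at h'
      rcases h' with ⟨_, h'⟩ | ⟨h', _⟩
      · exact hac h'
      · exact hv (h' ▸ hc)
    have h3 : s(v, b) ≠ s(v, c) := by
      intro h'; rw [Sym2.eq_iff] at h'
      rcases h' with ⟨_, h'⟩ | ⟨h', _⟩
      · exact hbc h'
      · exact hv (h' ▸ hc)
    have hnm : ∀ x : ℕ, s(v, x) ∉ E.erase s(a, b) := fun x h' =>
      hv (henneberg_mem hVE _ (Finset.mem_of_mem_erase h') v (by simp))
    have hV : (insert v V).card = V.card + 1 := Finset.card_insert_of_notMem hv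
    have hE : (insert s(v, a) (insert s(v, b) (insert s(v, c) (E.erase s(a, b))))).card
        = (E.card - 1) + 3 := by
      rw [Finset.card_insert_of_notMem (by simp [h1, h2, hnm a]),
        Finset.card_insert_of_notMem (by simp [h3, hnm b]),
        Finset.card_insert_of_notMem (hnm c), Finset.card_erase_of_mem he]
    rw [hV, hE]
    omega

lemma two_span (E₀ : Finset (Sym2 ℕ)) (T : Finset ℕ)
    (hnd : ∀ z ∈ E₀, ¬ z.IsDiag) (hT : T.card ≤ 2) :
    (spans E₀ T).card ≤ 2 * T.card - 3 := by
  have key : ∀ z ∈ spans E₀ T, Sym2.pairFinset z ⊆ T ∧ (Sym2.pairFinset z).card = 2 := by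
    intro z hz
    obtain ⟨hzE, hall⟩ := mem_spans.mp hz
    induction z using Sym2.ind with
    | _ x y =>
      have hxy : x ≠ y := by
        intro h'; exact hnd _ hzE (by rw [Sym2.mk_isDiag_iff]; exact h')
      constructor
      · intro t ht
        rw [Sym2.mem_pairFinset] at ht
        exact hall t ht
      · rw [Sym2.pairFinset, Sym2.lift_mk]
        exact Finset.card_pair hxy
  rcases Finset.eq_empty_or_nonempty (spans E₀ T) with hemp | ⟨z₀, hz₀⟩
  · simp [hemp]
  · have hT2 : T.card = 2 := by
      obtain ⟨hsub, hcard⟩ := key z₀ hz₀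
      have := Finset.card_le_card hsub
      omega
    have hone : (spans E₀ T).card ≤ 1 := by
      rw [Finset.card_le_one]
      intro z₁ h₁ z₂ h₂
      obtain ⟨hsub₁, hcard₁⟩ := key z₁ h₁
      obtain ⟨hsub₂, hcard₂⟩ := key z₂ h₂
      have he₁ : Sym2.pairFinset z₁ = T := Finset.eq_of_subset_of_card_le hsub₁ (by omega)
      have he₂ : Sym2.pairFinset z₂ = T := Finset.eq_of_subset_of_card_le hsub₂ (by omega)
      have hmemiff : ∀ x : ℕ, x ∈ z₁ ↔ x ∈ z₂ := by
        intro x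
        rw [← Sym2.mem_pairFinset, ← Sym2.mem_pairFinset (z := z₂), he₁, he₂]
      induction z₁ using Sym2.ind with
      | _ x₁ y₁ =>
        induction z₂ using Sym2.ind with
        | _ x₂ y₂ =>
          have hx := (hmemiff x₁).mp (by rw [Sym2.mem_iff]; left; rfl)
          have hy := (hmemiff y₁).mp (by rw [Sym2.mem_iff]; right; rfl)
          have hx' := (hmemiff x₂).mpr (by rw [Sym2.mem_iff]; left; rfl)
          have hy' := (hmemiff y₂).mpr (by rw [Sym2.mem_iff]; right; rfl)
          rw [Sym2.mem_iff] at hx hy hx' hy'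
          rw [Sym2.eq_iff]
          have hne₁ : x₁ ≠ y₁ := by
            intro h'
            exact hnd _ (mem_spans.mp h₁).1 (by rw [Sym2.mk_isDiag_iff]; exact h')
          have hne₂ : x₂ ≠ y₂ := by
            intro h'
            exact hnd _ (mem_spans.mp h₂).1 (by rw [Sym2.mk_isDiag_iff]; exact h')
          tauto
    omega

lemma henneberg_sparse {V : Finset ℕ} {E : Finset (Sym2 ℕ)} (h : Henneberg V E) :
    ∀ T : Finset ℕ, (spans E T).card ≤ 2 * T.card - 3 := by
  induction h with
  | triangle a b c hab hac hbc =>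
    intro T
    by_cases hT2 : T.card ≤ 2
    · exact two_span _ _ (henneberg_nondiag (.triangle a b c hab hac hbc)) hT2
    · have h1 : (spans {s(a, b), s(b, c), s(a, c)} T).card
          ≤ ({s(a, b), s(b, c), s(a, c)} : Finset (Sym2 ℕ)).card :=
        Finset.card_le_card (Finset.filter_subset _ _)
      have h2 : ({s(a, b), s(b, c), s(a, c)} : Finset (Sym2 ℕ)).card ≤ 3 := by
        apply le_trans (Finset.card_insert_le _ _)
        have := Finset.card_insert_le s(b, c) ({s(a, c)} : Finset (Sym2 ℕ))
        simp at this ⊢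
        omega
      omega
  | stepI V E hVE v u w hv hu hw huw ih =>
    intro T
    by_cases hT2 : T.card ≤ 2
    · exact two_span _ _ (henneberg_nondiag (.stepI V E hVE v u w hv hu hw huw)) hT2
    by_cases hvT : v ∈ T
    · have hsub : spans (insert s(v, u) (insert s(v, w) E)) T
          ⊆ insert s(v, u) (insert s(v, w) (spans E (T.erase v))) := by
        intro z hz
        obtain ⟨hzE, hall⟩ := mem_spans.mp hz
        simp only [Finset.mem_insert] at hzE ⊢
        rcases hzE with rfl | rfl | hzE
        · left; rfl
        · right; left; rfl
        · right; right
          rw [mem_spans]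
          refine ⟨hzE, fun x hx => Finset.mem_erase.mpr ⟨?_, hall x hx⟩⟩
          intro h'
          exact hv (h' ▸ henneberg_mem hVE _ hzE x hx)
      have hc1 := Finset.card_le_card hsub
      have hc2 := Finset.card_insert_le s(v, u) (insert s(v, w) (spans E (T.erase v)))
      have hc3 := Finset.card_insert_le s(v, w) (spans E (T.erase v))
      have hc4 := ih (T.erase v)
      have hc5 : (T.erase v).card = T.card - 1 := Finset.card_erase_of_mem hvT
      omega
    · have hsub : spans (insert s(v, u) (insert s(v, w) E)) T ⊆ spans E T := by
        intro z hz
        obtain ⟨hzE, hall⟩ := mem_spans.mp hz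
        simp only [Finset.mem_insert] at hzE
        rcases hzE with rfl | rfl | hzE
        · exact absurd (hall v (by simp)) hvT
        · exact absurd (hall v (by simp)) hvT
        · exact mem_spans.mpr ⟨hzE, hall⟩
      exact le_trans (Finset.card_le_card hsub) (ih T)
  | stepII V E hVE v a b c hv ha hb hc hab hac hbc he ih =>
    intro T
    by_cases hT2 : T.card ≤ 2
    · exact two_span _ _
        (henneberg_nondiag (.stepII V E hVE v a b c hv ha hb hc hab hac hbc he)) hT2
    by_cases hvT : v ∈ T
    · by_cases habT : a ∈ T ∧ b ∈ T
      · -- all of the edge `ab` is inside `T`, use the erase trick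
        have hmemab : s(a, b) ∈ spans E (T.erase v) := by
          rw [mem_spans]
          refine ⟨he, fun x hx => ?_⟩
          rw [Sym2.mem_iff] at hx
          rcases hx with rfl | rfl
          · exact Finset.mem_erase.mpr ⟨fun h' => hv (h' ▸ ha), habT.1⟩
          · exact Finset.mem_erase.mpr ⟨fun h' => hv (h' ▸ hb), habT.2⟩
        have hsub : spans (insert s(v, a) (insert s(v, b) (insert s(v, c) (E.erase s(a, b))))) T
            ⊆ insert s(v, a) (insert s(v, b) (insert s(v, c)
                ((spans E (T.erase v)).erase s(a, b)))) := by
          intro z hz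
          obtain ⟨hzE, hall⟩ := mem_spans.mp hz
          simp only [Finset.mem_insert] at hzE ⊢
          rcases hzE with rfl | rfl | rfl | hzE
          · tauto
          · tauto
          · tauto
          · right; right; right
            rw [Finset.mem_erase]
            refine ⟨(Finset.mem_erase.mp hzE).1, ?_⟩
            rw [mem_spans]
            have hzE' := Finset.mem_of_mem_erase hzE
            refine ⟨hzE', fun x hx => Finset.mem_erase.mpr ⟨?_, hall x hx⟩⟩
            intro h'
            exact hv (h' ▸ henneberg_mem hVE _ hzE' x hx)
        have hc1 := Finset.card_le_card hsub
        have hc2 := Finset.card_insert_le s(v, a) (insert s(v, b) (insert s(v, c)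
          ((spans E (T.erase v)).erase s(a, b))))
        have hc3 := Finset.card_insert_le s(v, b) (insert s(v, c)
          ((spans E (T.erase v)).erase s(a, b)))
        have hc4 := Finset.card_insert_le s(v, c) ((spans E (T.erase v)).erase s(a, b))
        have hc5 : ((spans E (T.erase v)).erase s(a, b)).card
            = (spans E (T.erase v)).card - 1 := Finset.card_erase_of_mem hmemab
        have hc6 := ih (T.erase v)
        have hc7 : (T.erase v).card = T.card - 1 := Finset.card_erase_of_mem hvT
        have hc8 : 1 ≤ (spans E (T.erase v)).card := Finset.card_pos.mpr ⟨_, hmemab⟩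
        omega
      · -- one of `a`, `b` is missing from `T`: at most two new edges appear
        have hsub : spans (insert s(v, a) (insert s(v, b) (insert s(v, c) (E.erase s(a, b))))) T
            ⊆ insert s(v, a) (insert s(v, b) (insert s(v, c) (spans E (T.erase v)))) := by
          intro z hz
          obtain ⟨hzE, hall⟩ := mem_spans.mp hz
          simp only [Finset.mem_insert] at hzE ⊢
          rcases hzE with rfl | rfl | rfl | hzE
          · tauto
          · tauto
          · tauto
          · right; right; right
            rw [mem_spans]
            have hzE' := Finset.mem_of_mem_erase hzE
            refine ⟨hzE', fun x hx => Finset.mem_erase.mpr ⟨?_, hall x hx⟩⟩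
            intro h'
            exact hv (h' ▸ henneberg_mem hVE _ hzE' x hx)
        -- in fact one of the first two new edges cannot occur, so we get the bound with 2
        have hcard : (spans (insert s(v, a) (insert s(v, b)
            (insert s(v, c) (E.erase s(a, b))))) T).card
            ≤ 2 + (spans E (T.erase v)).card := by
          rcases not_and_or.mp habT with haT | hbT
          · -- a ∉ T, so s(v,a) not spanned
            have hsub₂ : spans (insert s(v, a) (insert s(v, b)
                (insert s(v, c) (E.erase s(a, b))))) T
                ⊆ insert s(v, b) (insert s(v, c) (spans E (T.erase v))) := by
              intro z hz
              have hz' := hsub hz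
              obtain ⟨_, hall⟩ := mem_spans.mp hz
              simp only [Finset.mem_insert] at hz' ⊢
              rcases hz' with rfl | h' | h' | h'
              · exact absurd (hall a (by rw [Sym2.mem_iff]; right; rfl)) haT
              · tauto
              · tauto
              · tauto
            have hc1 := Finset.card_le_card hsub₂
            have hc2 := Finset.card_insert_le s(v, b) (insert s(v, c) (spans E (T.erase v)))
            have hc3 := Finset.card_insert_le s(v, c) (spans E (T.erase v))
            omega
          · -- b ∉ T, so s(v,b) not spanned
            have hsub₂ : spans (insert s(v, a) (insert s(v, b)
                (insert s(v, c) (E.erase s(a, b))))) T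
                ⊆ insert s(v, a) (insert s(v, c) (spans E (T.erase v))) := by
              intro z hz
              have hz' := hsub hz
              obtain ⟨_, hall⟩ := mem_spans.mp hz
              simp only [Finset.mem_insert] at hz' ⊢
              rcases hz' with h' | rfl | h' | h'
              · tauto
              · exact absurd (hall b (by rw [Sym2.mem_iff]; right; rfl)) hbT
              · tauto
              · tauto
            have hc1 := Finset.card_le_card hsub₂
            have hc2 := Finset.card_insert_le s(v, a) (insert s(v, c) (spans E (T.erase v)))
            have hc3 := Finset.card_insert_le s(v, c) (spans E (T.erase v))
            omega
        have hc4 := ih (T.erase v)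
        have hc5 : (T.erase v).card = T.card - 1 := Finset.card_erase_of_mem hvT
        omega
    · have hsub : spans (insert s(v, a) (insert s(v, b) (insert s(v, c) (E.erase s(a, b))))) T
          ⊆ spans E T := by
        intro z hz
        obtain ⟨hzE, hall⟩ := mem_spans.mp hz
        simp only [Finset.mem_insert] at hzE
        rcases hzE with rfl | rfl | rfl | hzE
        · exact absurd (hall v (by simp)) hvT
        · exact absurd (hall v (by simp)) hvT
        · exact absurd (hall v (by simp)) hvT
        · exact mem_spans.mpr ⟨Finset.mem_of_mem_erase hzE, hall⟩
      exact le_trans (Finset.card_le_card hsub) (ih T)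

/-- Hall's theorem gives an orientation respecting in-degree capacities, provided every
vertex set spans at most as many edges as its total capacity. -/
lemma orient_exists (E₀ : Finset (Sym2 ℕ)) (cap : ℕ → ℕ)
    (hall : ∀ T : Finset ℕ, (spans E₀ T).card ≤ ∑ v ∈ T, cap v) :
    ∃ o : Sym2 ℕ → ℕ, (∀ z ∈ E₀, o z ∈ z) ∧
      ∀ v : ℕ, (E₀.filter (fun z => o z = v)).card ≤ cap v := by
  classical
  set slots : ℕ → Finset (ℕ × ℕ) := fun x => {x} ×ˢ Finset.range (cap x) with hslots
  set t : {z // z ∈ E₀} → Finset (ℕ × ℕ) :=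
    fun z => (Sym2.pairFinset z.1).biUnion slots with ht
  have hmem_t : ∀ (z : {z // z ∈ E₀}) (p : ℕ × ℕ),
      p ∈ t z ↔ p.1 ∈ z.1 ∧ p.2 < cap p.1 := by
    intro z p
    simp only [ht, Finset.mem_biUnion, Sym2.mem_pairFinset, hslots, Finset.mem_product,
      Finset.mem_singleton, Finset.mem_range]
    constructor
    · rintro ⟨x, hx, hp1, hp2⟩
      exact ⟨hp1 ▸ hx, hp1 ▸ hp2⟩
    · rintro ⟨h1, h2⟩
      exact ⟨p.1, h1, rfl, h2⟩
  have hHall : ∀ s : Finset {z // z ∈ E₀}, s.card ≤ (s.biUnion t).card := by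
    intro s
    set T : Finset ℕ := s.biUnion (fun z => Sym2.pairFinset z.1) with hT
    have h1 : s.card ≤ (spans E₀ T).card := by
      apply Finset.card_le_card_of_injOn (fun z => z.1)
      · intro z hz
        simp only [Finset.mem_coe]
        rw [mem_spans]
        refine ⟨z.2, fun x hx => ?_⟩
        rw [hT, Finset.mem_biUnion]
        exact ⟨z, hz, (Sym2.mem_pairFinset x z.1).mpr hx⟩
      · intro z₁ _ z₂ _ h'
        exact Subtype.ext h'
    have h2 : s.biUnion t = T.biUnion slots := by
      ext p
      simp only [ht, hT, Finset.mem_biUnion]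
      constructor
      · rintro ⟨z, hz, hp⟩
        obtain ⟨x, hx, hp⟩ := hp
        exact ⟨x, ⟨z, hz, hx⟩, hp⟩
      · rintro ⟨x, ⟨z, hz, hx⟩, hp⟩
        exact ⟨z, hz, x, hx, hp⟩
    have h3 : (T.biUnion slots).card = ∑ x ∈ T, cap x := by
      rw [Finset.card_biUnion]
      · apply Finset.sum_congr rfl
        intro x _
        simp [hslots]
      · intro x _ y _ hxy
        rw [Function.onFun, Finset.disjoint_left]
        intro p hp hp'
        simp only [hslots, Finset.mem_product, Finset.mem_singleton] at hp hp'
        exact hxy (hp.1.symm.trans hp'.1)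
    calc s.card ≤ (spans E₀ T).card := h1
      _ ≤ ∑ x ∈ T, cap x := hall T
      _ = (T.biUnion slots).card := h3.symm
      _ = (s.biUnion t).card := by rw [h2]
  obtain ⟨f, hfinj, hft⟩ := (Finset.all_card_le_biUnion_card_iff_exists_injective t).mp hHall
  refine ⟨fun z => if h : z ∈ E₀ then (f ⟨z, h⟩).1 else 0, ?_, ?_⟩
  · intro z hz
    simp only [dif_pos hz]
    exact ((hmem_t ⟨z, hz⟩ _).mp (hft ⟨z, hz⟩)).1
  · intro v
    rw [← Finset.card_range (cap v)]
    apply Finset.card_le_card_of_injOn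
      (fun z => if h : z ∈ E₀ then (f ⟨z, h⟩).2 else 0)
    · intro z hz
      obtain ⟨hzE, hzv⟩ := Finset.mem_filter.mp hz
      simp only [dif_pos hzE] at hzv ⊢
      rw [Finset.mem_coe, Finset.mem_range]
      have := ((hmem_t ⟨z, hzE⟩ _).mp (hft ⟨z, hzE⟩)).2
      rwa [hzv] at this
    · intro z₁ h₁ z₂ h₂ h'
      simp only [Finset.coe_filter, Set.mem_setOf_eq] at h₁ h₂
      obtain ⟨he₁, hv₁⟩ := h₁
      obtain ⟨he₂, hv₂⟩ := h₂
      simp only [dif_pos he₁, dif_pos he₂] at h' hv₁ hv₂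
      have : f ⟨z₁, he₁⟩ = f ⟨z₂, he₂⟩ := Prod.ext (hv₁.trans hv₂.symm) h'
      exact congrArg Subtype.val (hfinj this)

/-- every Laman graph (on `n ≥ 3` vertices) has exactly `2n − 3`
edges, and after removing one fixed edge `[v₁, v₂]` the remaining edges can be
oriented (`o e` denotes the head of the edge `e`) so that every vertex other
than `v₁` and `v₂` has in-degree exactly `2`, while `v₁` and `v₂` have
in-degree `0`. -/
theorem laman_orientation (V : Finset ℕ) (E : Finset (Sym2 ℕ))
    (h : Henneberg V E) (v₁ v₂ : ℕ) (h₁₂ : v₁ ≠ v₂) (he : s(v₁, v₂) ∈ E) :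
    E.card = 2 * V.card - 3 ∧
      ∃ o : Sym2 ℕ → ℕ,
        (∀ e ∈ E.erase s(v₁, v₂), o e ∈ e) ∧
        (∀ v ∈ V, v ≠ v₁ → v ≠ v₂ →
          ((E.erase s(v₁, v₂)).filter (fun e => o e = v)).card = 2) ∧
        (∀ e ∈ E.erase s(v₁, v₂), o e ≠ v₁ ∧ o e ≠ v₂) := by
  classical
  obtain ⟨hV3, hcard⟩ := henneberg_card h
  have hmem := henneberg_mem h
  have hv₁ : v₁ ∈ V := hmem _ he v₁ (by rw [Sym2.mem_iff]; left; rfl)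
  have hv₂ : v₂ ∈ V := hmem _ he v₂ (by rw [Sym2.mem_iff]; right; rfl)
  refine ⟨hcard, ?_⟩
  set E₀ := E.erase s(v₁, v₂) with hE₀
  set cap : ℕ → ℕ := fun v => if v = v₁ ∨ v = v₂ then 0 else 2 with hcap
  have hsum : ∀ T : Finset ℕ,
      ∑ x ∈ T, cap x = 2 * (T.card - (T.filter (fun v => v = v₁ ∨ v = v₂)).card) := by
    intro T
    rw [hcap, Finset.sum_ite, Finset.sum_const, Finset.sum_const]
    have := Finset.card_filter_add_card_filter_not
      (s := T) (p := fun v => v = v₁ ∨ v = v₂)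
    simp only [smul_eq_mul]
    omega
  have hall : ∀ T : Finset ℕ, (spans E₀ T).card ≤ ∑ x ∈ T, cap x := by
    intro T
    have hsp := henneberg_sparse h T
    rw [hsum T]
    have hfsub : T.filter (fun v => v = v₁ ∨ v = v₂) ⊆ {v₁, v₂} := by
      intro x hx
      obtain ⟨_, hx'⟩ := Finset.mem_filter.mp hx
      simpa using hx'
    have hfcard : (T.filter (fun v => v = v₁ ∨ v = v₂)).card ≤ 2 := by
      apply le_trans (Finset.card_le_card hfsub)
      rw [Finset.card_insert_of_notMem (by simp [h₁₂]), Finset.card_singleton]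
    by_cases hboth : v₁ ∈ T ∧ v₂ ∈ T
    · -- the removed edge is spanned by T
      have hmemsp : s(v₁, v₂) ∈ spans E T := by
        rw [mem_spans]
        refine ⟨he, fun x hx => ?_⟩
        rw [Sym2.mem_iff] at hx
        rcases hx with rfl | rfl
        · exact hboth.1
        · exact hboth.2
      have hspE₀ : spans E₀ T = (spans E T).erase s(v₁, v₂) := by
        rw [hE₀, spans, spans, Finset.filter_erase]
      have hc1 : (spans E₀ T).card = (spans E T).card - 1 := by
        rw [hspE₀, Finset.card_erase_of_mem hmemsp]
      have hc2 : 1 ≤ (spans E T).card := Finset.card_pos.mpr ⟨_, hmemsp⟩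
      have hfeq : (T.filter (fun v => v = v₁ ∨ v = v₂)).card = 2 := by
        have hsub' : ({v₁, v₂} : Finset ℕ) ⊆ T.filter (fun v => v = v₁ ∨ v = v₂) := by
          intro x hx
          simp only [Finset.mem_insert, Finset.mem_singleton] at hx
          rcases hx with rfl | rfl
          · exact Finset.mem_filter.mpr ⟨hboth.1, Or.inl rfl⟩
          · exact Finset.mem_filter.mpr ⟨hboth.2, Or.inr rfl⟩
        have := Finset.card_le_card hsub'
        rw [Finset.card_insert_of_notMem (by simp [h₁₂]), Finset.card_singleton] at this
        omega
      have hT2 : 2 ≤ T.card := by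
        have hsub' : ({v₁, v₂} : Finset ℕ) ⊆ T := by
          intro x hx
          simp only [Finset.mem_insert, Finset.mem_singleton] at hx
          rcases hx with rfl | rfl
          · exact hboth.1
          · exact hboth.2
        have := Finset.card_le_card hsub'
        rwa [Finset.card_insert_of_notMem (by simp [h₁₂]), Finset.card_singleton] at this
      rw [hfeq, hc1]
      omega
    · -- at most one of v₁, v₂ is in T
      have hfone : (T.filter (fun v => v = v₁ ∨ v = v₂)).card ≤ 1 := by
        rcases not_and_or.mp hboth with h' | h'
        · have : T.filter (fun v => v = v₁ ∨ v = v₂) ⊆ {v₂} := by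
            intro x hx
            obtain ⟨hxT, hx'⟩ := Finset.mem_filter.mp hx
            rcases hx' with rfl | rfl
            · exact absurd hxT h'
            · exact Finset.mem_singleton_self _
          simpa using Finset.card_le_card this
        · have : T.filter (fun v => v = v₁ ∨ v = v₂) ⊆ {v₁} := by
            intro x hx
            obtain ⟨hxT, hx'⟩ := Finset.mem_filter.mp hx
            rcases hx' with rfl | rfl
            · exact Finset.mem_singleton_self _
            · exact absurd hxT h'
          simpa using Finset.card_le_card this
      have hsub' : spans E₀ T ⊆ spans E T :=
        Finset.filter_subset_filter _ (Finset.erase_subset _ _)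
      have hc1 := Finset.card_le_card hsub'
      have hcase : (T.filter (fun v => v = v₁ ∨ v = v₂)).card = 0 ∨ T.card ≥ 1 := by
        rcases Nat.eq_zero_or_pos T.card with h0 | h1
        · left
          have := Finset.card_filter_le T (fun v => v = v₁ ∨ v = v₂)
          omega
        · right; exact h1
      omega
  obtain ⟨o, ho1, ho2⟩ := orient_exists E₀ cap hall
  have hE₀card : E₀.card = E.card - 1 := Finset.card_erase_of_mem he
  have hpart : ∑ v ∈ V, (E₀.filter (fun z => o z = v)).card = E₀.card :=
    (Finset.card_eq_sum_card_fiberwise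
      (fun z hz => hmem z (Finset.mem_of_mem_erase hz) (o z) (ho1 z hz))).symm
  have hscap : ∑ v ∈ V, cap v = E₀.card := by
    rw [hsum V]
    have hfeq : (V.filter (fun v => v = v₁ ∨ v = v₂)).card = 2 := by
      have h1 : V.filter (fun v => v = v₁ ∨ v = v₂) = {v₁, v₂} := by
        ext x
        simp only [Finset.mem_filter, Finset.mem_insert, Finset.mem_singleton]
        constructor
        · rintro ⟨_, h'⟩; exact h'
        · rintro (rfl | rfl)
          · exact ⟨hv₁, Or.inl rfl⟩
          · exact ⟨hv₂, Or.inr rfl⟩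
      rw [h1, Finset.card_insert_of_notMem (by simp [h₁₂]), Finset.card_singleton]
    rw [hfeq]
    omega
  have heq : ∀ v ∈ V, (E₀.filter (fun z => o z = v)).card = cap v := by
    have hle : ∀ v ∈ V, (E₀.filter (fun z => o z = v)).card ≤ cap v := fun v _ => ho2 v
    exact (Finset.sum_eq_sum_iff_of_le hle).mp (hpart.trans hscap.symm)
  refine ⟨o, ho1, ?_, ?_⟩
  · intro v hv hne1 hne2
    have := heq v hv
    simp only [hcap] at this
    rwa [if_neg (by tauto)] at this
  · intro z hz
    have hc1 : (E₀.filter (fun z => o z = v₁)).card = 0 := by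
      have := ho2 v₁
      simp only [hcap, if_pos (Or.inl rfl)] at this
      omega
    have hc2 : (E₀.filter (fun z => o z = v₂)).card = 0 := by
      have := ho2 v₂
      simp only [hcap, if_pos (Or.inr rfl)] at this
      omega
    constructor
    · intro h'
      have : z ∈ E₀.filter (fun z => o z = v₁) := Finset.mem_filter.mpr ⟨hz, h'⟩
      rw [Finset.card_eq_zero.mp hc1] at this
      exact absurd this (Finset.notMem_empty _)
    · intro h'
      have : z ∈ E₀.filter (fun z => o z = v₂) := Finset.mem_filter.mpr ⟨hz, h'⟩
      rw [Finset.card_eq_zero.mp hc2] at this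
      exact absurd this (Finset.notMem_empty _)
end

section
/- Every graph obtained from a triangle by a sequence of Henneberg I steps (each step adds one new vertex and two new edges connecting it to two distinct existing vertices) has the Laman property: it has 2n−3 edges on n vertices and every subset of k ≥ 2 vertices spans at most 2k−3 edges. -/
open scoped Classical

/-- Graphs (given by a vertex set `V ⊆ ℕ` and an edge set `E` of unordered
pairs) obtainable from a triangle by Henneberg I steps only. -/
inductive HennebergI : Finset ℕ → Finset (Sym2 ℕ) → Prop
  | triangle (a b c : ℕ) (hab : a ≠ b) (hac : a ≠ c) (hbc : b ≠ c) :
      HennebergI {a, b, c} {s(a, b), s(b, c), s(a, c)}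
  | stepI (V : Finset ℕ) (E : Finset (Sym2 ℕ)) (hVE : HennebergI V E)
      (v u w : ℕ) (hv : v ∉ V) (hu : u ∈ V) (hw : w ∈ V) (huw : u ≠ w) :
      HennebergI (insert v V) (insert s(v, u) (insert s(v, w) E))

lemma hennebergI_aux (V : Finset ℕ) (E : Finset (Sym2 ℕ)) (h : HennebergI V E) :
    3 ≤ V.card ∧ (∀ e ∈ E, ¬ e.IsDiag) ∧ (∀ e ∈ E, ∀ x ∈ e, x ∈ V) ∧
    E.card = 2 * V.card - 3 ∧
      ∀ S ⊆ V, 2 ≤ S.card →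
        (E.filter (fun e => ∀ v ∈ e, v ∈ S)).card ≤ 2 * S.card - 3 := by
  induction h with
  | triangle a b c hab hac hbc =>
    have hV : ({a, b, c} : Finset ℕ).card = 3 := by
      rw [Finset.card_insert_of_notMem (by simp [hab, hac]),
        Finset.card_insert_of_notMem (by simp [hbc]), Finset.card_singleton]
    have hE : ({s(a, b), s(b, c), s(a, c)} : Finset (Sym2 ℕ)).card = 3 := by
      rw [Finset.card_insert_of_notMem (by simp [Sym2.eq_iff]; tauto),
        Finset.card_insert_of_notMem (by simp [Sym2.eq_iff]; tauto),
        Finset.card_singleton]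
    refine ⟨by omega, ?_, ?_, by omega, ?_⟩
    · intro e he
      simp only [Finset.mem_insert, Finset.mem_singleton] at he
      rcases he with rfl | rfl | rfl <;> simp [Sym2.mk_isDiag_iff, hab, hac, hbc]
    · intro e he x hx
      simp only [Finset.mem_insert, Finset.mem_singleton] at he
      rcases he with rfl | rfl | rfl <;> simp only [Sym2.mem_iff] at hx <;>
        rcases hx with rfl | rfl <;> simp
    · intro S hS hS2
      rcases le_or_gt 3 S.card with h3 | h3
      · calc (Finset.filter (fun e => ∀ v ∈ e, v ∈ S)
              {s(a, b), s(b, c), s(a, c)}).card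
            ≤ ({s(a, b), s(b, c), s(a, c)} : Finset (Sym2 ℕ)).card :=
              Finset.card_le_card (Finset.filter_subset _ _)
          _ ≤ 2 * S.card - 3 := by omega
      · have hS2' : S.card = 2 := by omega
        have key : a ∈ S → b ∈ S → c ∈ S → False := by
          intro ha hb hc
          have hsub : ({a, b, c} : Finset ℕ) ⊆ S := by
            intro x hx
            simp only [Finset.mem_insert, Finset.mem_singleton] at hx
            rcases hx with rfl | rfl | rfl <;> assumption
          have := Finset.card_le_card hsub
          omega
        have hle1 : (Finset.filter (fun e => ∀ v ∈ e, v ∈ S)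
            {s(a, b), s(b, c), s(a, c)}).card ≤ 1 := by
          apply Finset.card_le_one.mpr
          intro e₁ h₁ e₂ h₂
          simp only [Finset.mem_filter, Finset.mem_insert, Finset.mem_singleton]
            at h₁ h₂
          obtain ⟨h₁e, h₁s⟩ := h₁
          obtain ⟨h₂e, h₂s⟩ := h₂
          by_contra hne
          rcases h₁e with rfl | rfl | rfl <;> rcases h₂e with rfl | rfl | rfl <;>
            simp only [Sym2.mem_iff, forall_eq_or_imp, forall_eq] at h₁s h₂s <;>
            first
              | exact hne rfl
              | exact key (by tauto) (by tauto) (by tauto)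
        omega
  | stepI V E hVE v u w hv hu hw huw ih =>
    obtain ⟨hV3, hdiag, hend, hcard, hsub⟩ := ih
    have hvu : v ≠ u := fun h => hv (h ▸ hu)
    have hvw : v ≠ w := fun h => hv (h ▸ hw)
    have hnu : s(v, u) ∉ E := fun h => hv (hend _ h v (by simp))
    have hnw : s(v, w) ∉ E := fun h => hv (hend _ h v (by simp))
    have hne : s(v, u) ≠ s(v, w) := by simp [Sym2.eq_iff]; tauto
    have hVc : (insert v V).card = V.card + 1 := Finset.card_insert_of_notMem hv
    have hEc : (insert s(v, u) (insert s(v, w) E)).card = E.card + 2 := by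
      rw [Finset.card_insert_of_notMem (by simp [hne, hnu]),
        Finset.card_insert_of_notMem hnw]
    have hdiag' : ∀ e ∈ insert s(v, u) (insert s(v, w) E), ¬ e.IsDiag := by
      intro e he
      simp only [Finset.mem_insert] at he
      rcases he with rfl | rfl | he
      · simp [Sym2.mk_isDiag_iff, hvu]
      · simp [Sym2.mk_isDiag_iff, hvw]
      · exact hdiag e he
    refine ⟨by omega, hdiag', ?_, by omega, ?_⟩
    · intro e he x hx
      simp only [Finset.mem_insert] at he
      rcases he with rfl | rfl | he
      · simp only [Sym2.mem_iff] at hx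
        rcases hx with rfl | rfl <;> simp [hu]
      · simp only [Sym2.mem_iff] at hx
        rcases hx with rfl | rfl <;> simp [hw]
      · exact Finset.mem_insert_of_mem (hend e he x hx)
    · intro S hS hS2
      by_cases hvS : v ∈ S
      · -- v ∈ S : compare with S.erase v
        set S' := S.erase v with hS'def
        have hS'V : S' ⊆ V := by
          intro x hx
          rw [Finset.mem_erase] at hx
          rcases Finset.mem_insert.mp (hS hx.2) with h | h
          · exact absurd h hx.1
          · exact h
        have hS'c : S'.card = S.card - 1 := Finset.card_erase_of_mem hvS
        have hfE : E.filter (fun e => ∀ x ∈ e, x ∈ S)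
            = E.filter (fun e => ∀ x ∈ e, x ∈ S') := by
          apply Finset.filter_congr
          intro e he
          constructor
          · intro hall x hx
            rw [Finset.mem_erase]
            exact ⟨fun h => hv (h ▸ hend e he x hx), hall x hx⟩
          · intro hall x hx
            exact Finset.mem_of_mem_erase (hall x hx)
        have hsubs : (insert s(v, u) (insert s(v, w) E)).filter
              (fun e => ∀ x ∈ e, x ∈ S)
            ⊆ insert s(v, u) (insert s(v, w)
              (E.filter (fun e => ∀ x ∈ e, x ∈ S'))) := by
          intro e he
          rw [Finset.mem_filter] at he
          obtain ⟨he1, he2⟩ := he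
          simp only [Finset.mem_insert] at he1 ⊢
          rcases he1 with rfl | rfl | he1
          · tauto
          · tauto
          · refine Or.inr (Or.inr ?_)
            rw [← hfE]
            exact Finset.mem_filter.mpr ⟨he1, he2⟩
        have hcardle : ((insert s(v, u) (insert s(v, w) E)).filter
              (fun e => ∀ x ∈ e, x ∈ S)).card
            ≤ (E.filter (fun e => ∀ x ∈ e, x ∈ S')).card + 2 := by
          calc _ ≤ (insert s(v, u) (insert s(v, w)
                (E.filter (fun e => ∀ x ∈ e, x ∈ S')))).card :=
              Finset.card_le_card hsubs
            _ ≤ (insert s(v, w)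
                (E.filter (fun e => ∀ x ∈ e, x ∈ S'))).card + 1 :=
              Finset.card_insert_le _ _
            _ ≤ (E.filter (fun e => ∀ x ∈ e, x ∈ S')).card + 1 + 1 := by
              have := Finset.card_insert_le s(v, w)
                (E.filter (fun e => ∀ x ∈ e, x ∈ S'))
              omega
            _ = _ := by omega
        rcases le_or_gt 2 S'.card with h2 | h2
        · have := hsub S' hS'V h2
          omega
        · -- S'.card = 1
          have hS'1 : S'.card = 1 := by omega
          obtain ⟨z, hz⟩ := Finset.card_eq_one.mp hS'1
          have hSeq : S = insert v S' := (Finset.insert_erase hvS).symm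
          have hss : (insert s(v, u) (insert s(v, w) E)).filter
              (fun e => ∀ x ∈ e, x ∈ S) ⊆ {s(v, z)} := by
            intro e he
            rw [Finset.mem_filter] at he
            obtain ⟨he1, he2⟩ := he
            have hnd := hdiag' e he1
            revert hnd he2
            induction e using Sym2.ind with
            | _ x y =>
              intro he2 hnd
              have hx : x ∈ S := he2 x (by simp)
              have hy : y ∈ S := he2 y (by simp)
              rw [hSeq, hz] at hx hy
              simp only [Finset.mem_insert, Finset.mem_singleton] at hx hy
              have hxy : x ≠ y := fun h => hnd (by simp [Sym2.mk_isDiag_iff, h])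
              rw [Finset.mem_singleton]
              rcases hx with rfl | rfl <;> rcases hy with rfl | rfl <;>
                first
                  | exact absurd rfl hxy
                  | simp [Sym2.eq_iff]
          have := Finset.card_le_card hss
          simp only [Finset.card_singleton] at this
          omega
      · -- v ∉ S : new edges don't count, and S ⊆ V
        have hSV : S ⊆ V := by
          intro x hx
          rcases Finset.mem_insert.mp (hS hx) with h | h
          · exact absurd (h ▸ hx) hvS
          · exact h
        have hfilt : (insert s(v, u) (insert s(v, w) E)).filter
              (fun e => ∀ x ∈ e, x ∈ S)
            = E.filter (fun e => ∀ x ∈ e, x ∈ S) := by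
          rw [Finset.filter_insert, Finset.filter_insert,
            if_neg (fun hall => hvS (hall v (by simp))),
            if_neg (fun hall => hvS (hall v (by simp)))]
        rw [hfilt]
        exact hsub S hSV hS2

/-- every Henneberg I graph has the Laman property: it has
`2n − 3` edges on `n` vertices, and every subset of `k ≥ 2` vertices spans at
most `2k − 3` edges. -/
theorem hennebergI_laman (V : Finset ℕ) (E : Finset (Sym2 ℕ))
    (h : HennebergI V E) :
    E.card = 2 * V.card - 3 ∧
      ∀ S ⊆ V, 2 ≤ S.card →
        (E.filter (fun e => ∀ v ∈ e, v ∈ S)).card ≤ 2 * S.card - 3 := by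
  obtain ⟨_, _, _, h1, h2⟩ := hennebergI_aux V E h
  exact ⟨h1, h2⟩
end

section
/- Up to graph isomorphism, there are exactly two Laman graphs on 6 vertices that are not Henneberg I constructible: the Desargues graph (the 3-prism, i.e. two triangles joined by a perfect matching) and the complete bipartite graph K_{3,3}. -/
open scoped Classical

/-- The Laman property for a graph given by a vertex set `V ⊆ ℕ` and edge set
`E`: edges are non-loops between vertices of `V`, there are `2|V| − 3` edges,
and every subset of `k ≥ 2` vertices spans at most `2k − 3` edges. -/
def Laman (V : Finset ℕ) (E : Finset (Sym2 ℕ)) : Prop :=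
  (∀ e ∈ E, ¬ e.IsDiag ∧ ∀ v ∈ e, v ∈ V) ∧
  E.card = 2 * V.card - 3 ∧
  ∀ S ⊆ V, 2 ≤ S.card →
    (E.filter (fun e => ∀ v ∈ e, v ∈ S)).card ≤ 2 * S.card - 3

/-- Graph isomorphism between two graphs on finite vertex sets in `ℕ`. -/
def GraphIso (V₁ : Finset ℕ) (E₁ : Finset (Sym2 ℕ))
    (V₂ : Finset ℕ) (E₂ : Finset (Sym2 ℕ)) : Prop :=
  ∃ f : ℕ → ℕ, Set.BijOn f (V₁ : Set ℕ) (V₂ : Set ℕ) ∧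
    ∀ u ∈ V₁, ∀ w ∈ V₁, (s(u, w) ∈ E₁ ↔ s(f u, f w) ∈ E₂)

/-- The Desargues graph (3-prism): two triangles `{0,1,2}`, `{3,4,5}` joined by
the perfect matching `0-3, 1-4, 2-5`. -/
def desarguesE : Finset (Sym2 ℕ) :=
  {s(0,1), s(1,2), s(0,2), s(3,4), s(4,5), s(3,5), s(0,3), s(1,4), s(2,5)}

/-- The complete bipartite graph `K_{3,3}` with parts `{0,1,2}` and `{3,4,5}`. -/
def k33E : Finset (Sym2 ℕ) :=
  {s(0,3), s(0,4), s(0,5), s(1,3), s(1,4), s(1,5), s(2,3), s(2,4), s(2,5)}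

instance sym2Ball (p : ℕ → Prop) [DecidablePred p] (e : Sym2 ℕ) : Decidable (∀ v ∈ e, p v) :=
  Quot.recOnSubsingleton e (fun xy =>
    decidable_of_iff (p xy.1 ∧ p xy.2) (by
      constructor
      · rintro ⟨h1, h2⟩ v hv
        rcases Sym2.mem_iff.1 hv with rfl | rfl <;> assumption
      · intro h; exact ⟨h _ (Sym2.mem_mk_left _ _), h _ (Sym2.mem_mk_right _ _)⟩))

/-- Decidable-friendly version of the Laman property. -/
def LamanP (V : Finset ℕ) (E : Finset (Sym2 ℕ)) : Prop :=
  (∀ e ∈ E, ¬ e.IsDiag ∧ ∀ v ∈ e, v ∈ V) ∧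
  E.card = 2 * V.card - 3 ∧
  ∀ S ∈ V.powerset, 2 ≤ S.card →
    (E.filter (fun e => ∀ v ∈ e, v ∈ S)).card ≤ 2 * S.card - 3

lemma laman_iff (V : Finset ℕ) (E : Finset (Sym2 ℕ)) : Laman V E ↔ LamanP V E := by
  unfold Laman LamanP
  simp only [Finset.mem_powerset]
  congr!

/-- degree of a vertex -/
def deg (E : Finset (Sym2 ℕ)) (v : ℕ) : ℕ := (E.filter (fun e => v ∈ e)).card

lemma sum_deg (V : Finset ℕ) (E : Finset (Sym2 ℕ))
    (hE : ∀ e ∈ E, ¬ e.IsDiag ∧ ∀ v ∈ e, v ∈ V) :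
    ∑ v ∈ V, deg E v = 2 * E.card := by
  have h1 : ∑ v ∈ V, deg E v = ∑ v ∈ V, ∑ e ∈ E, if v ∈ e then 1 else 0 := by
    refine Finset.sum_congr rfl fun v _ => ?_
    exact Finset.card_filter _ _
  rw [h1, Finset.sum_comm]
  have h2 : ∀ e ∈ E, (∑ v ∈ V, if v ∈ e then 1 else 0) = 2 := by
    intro e he
    obtain ⟨hd, hv⟩ := hE e he
    induction e using Sym2.ind with
    | _ x y =>
      have hxy : x ≠ y := by
        intro h; exact hd (by simp [h, Sym2.isDiag_iff_proj_eq])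
      have hfe : V.filter (fun v => v ∈ s(x,y)) = {x, y} := by
        ext z
        simp only [Finset.mem_filter, Sym2.mem_iff, Finset.mem_insert,
          Finset.mem_singleton]
        constructor
        · rintro ⟨_, h⟩; exact h
        · rintro (rfl | rfl)
          · exact ⟨hv _ (Sym2.mem_mk_left _ _), Or.inl rfl⟩
          · exact ⟨hv _ (Sym2.mem_mk_right _ _), Or.inr rfl⟩
      have := (Finset.card_filter (fun v => v ∈ s(x,y)) V).symm
      rw [this, hfe, Finset.card_insert_of_notMem (by simp [hxy]),
        Finset.card_singleton]
  rw [Finset.sum_congr rfl h2, Finset.sum_const, smul_eq_mul, mul_comm]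
lemma filter_erase_eq (V : Finset ℕ) (E : Finset (Sym2 ℕ))
    (hE : ∀ e ∈ E, ¬ e.IsDiag ∧ ∀ v ∈ e, v ∈ V) (v : ℕ) :
    E.filter (fun e => ∀ x ∈ e, x ∈ V.erase v) = E.filter (fun e => ¬ v ∈ e) := by
  apply Finset.filter_congr
  intro e he
  obtain ⟨hd, hend⟩ := hE e he
  constructor
  · intro h hv
    exact Finset.notMem_erase v V (h v hv)
  · intro h x hx
    exact Finset.mem_erase.2 ⟨fun hxv => h (hxv ▸ hx), hend x hx⟩

lemma deg_ge_two (V : Finset ℕ) (E : Finset (Sym2 ℕ)) (hL : LamanP V E)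
    (hV : 3 ≤ V.card) (v : ℕ) (hv : v ∈ V) : 2 ≤ deg E v := by
  obtain ⟨hE, hcard, hsub⟩ := hL
  have h1 := hsub (V.erase v) (Finset.mem_powerset.2 (Finset.erase_subset _ _))
    (by rw [Finset.card_erase_of_mem hv]; omega)
  rw [Finset.card_erase_of_mem hv, filter_erase_eq V E hE v] at h1
  have h2 := Finset.card_filter_add_card_filter_not
    (s := E) (p := fun e => v ∈ e)
  unfold deg
  omega

lemma neighbors3 (V : Finset ℕ) (E : Finset (Sym2 ℕ))
    (hE : ∀ e ∈ E, ¬ e.IsDiag ∧ ∀ v ∈ e, v ∈ V) (v : ℕ)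
    (h3 : deg E v = 3) :
    ∃ p q r : ℕ, p ≠ q ∧ p ≠ r ∧ q ≠ r ∧ p ≠ v ∧ q ≠ v ∧ r ≠ v ∧
      p ∈ V ∧ q ∈ V ∧ r ∈ V ∧
      E.filter (fun e => v ∈ e) = {s(v,p), s(v,q), s(v,r)} := by
  obtain ⟨e1, e2, e3, h12, h13, h23, hfe⟩ := Finset.card_eq_three.1 h3
  have m1 : e1 ∈ E.filter (fun e => v ∈ e) := by rw [hfe]; simp
  have m2 : e2 ∈ E.filter (fun e => v ∈ e) := by rw [hfe]; simp
  have m3 : e3 ∈ E.filter (fun e => v ∈ e) := by rw [hfe]; simp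
  simp only [Finset.mem_filter] at m1 m2 m3
  obtain ⟨he1, hv1⟩ := m1
  obtain ⟨he2, hv2⟩ := m2
  obtain ⟨he3, hv3⟩ := m3
  refine ⟨Sym2.Mem.other hv1, Sym2.Mem.other hv2, Sym2.Mem.other hv3, ?_, ?_, ?_, ?_, ?_, ?_, ?_, ?_, ?_, ?_⟩
  · intro h; exact h12 (by rw [← Sym2.other_spec hv1, ← Sym2.other_spec hv2, h])
  · intro h; exact h13 (by rw [← Sym2.other_spec hv1, ← Sym2.other_spec hv3, h])
  · intro h; exact h23 (by rw [← Sym2.other_spec hv2, ← Sym2.other_spec hv3, h])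
  · intro h
    exact (hE e1 he1).1 (by rw [← Sym2.other_spec hv1, h]; exact Sym2.diag_isDiag v)
  · intro h
    exact (hE e2 he2).1 (by rw [← Sym2.other_spec hv2, h]; exact Sym2.diag_isDiag v)
  · intro h
    exact (hE e3 he3).1 (by rw [← Sym2.other_spec hv3, h]; exact Sym2.diag_isDiag v)
  · exact (hE e1 he1).2 _ (Sym2.other_mem hv1)
  · exact (hE e2 he2).2 _ (Sym2.other_mem hv2)
  · exact (hE e3 he3).2 _ (Sym2.other_mem hv3)
  · rw [hfe, Sym2.other_spec hv1, Sym2.other_spec hv2, Sym2.other_spec hv3]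

lemma neighbor_mem {E : Finset (Sym2 ℕ)} {v p q r w : ℕ}
    (hfil : E.filter (fun e => v ∈ e) = {s(v,p), s(v,q), s(v,r)})
    (hp : p ≠ v) (hq : q ≠ v) (hr : r ≠ v)
    (hw : s(v,w) ∈ E) : w = p ∨ w = q ∨ w = r := by
  have : s(v,w) ∈ E.filter (fun e => v ∈ e) :=
    Finset.mem_filter.2 ⟨hw, Sym2.mem_mk_left _ _⟩
  rw [hfil] at this
  simp only [Finset.mem_insert, Finset.mem_singleton, Sym2.eq_iff] at this
  rcases this with (⟨_,h⟩|⟨h,_⟩) | (⟨_,h⟩|⟨h,_⟩) | (⟨_,h⟩|⟨h,_⟩) <;> omega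

lemma edge_of_filter3 {E : Finset (Sym2 ℕ)} {v p q r : ℕ}
    (hfil : E.filter (fun e => v ∈ e) = {s(v,p), s(v,q), s(v,r)}) :
    s(v,p) ∈ E ∧ s(v,q) ∈ E ∧ s(v,r) ∈ E := by
  refine ⟨?_, ?_, ?_⟩
  · have : s(v,p) ∈ E.filter (fun e => v ∈ e) := by rw [hfil]; simp
    exact (Finset.mem_filter.1 this).1
  · have : s(v,q) ∈ E.filter (fun e => v ∈ e) := by rw [hfil]; simp
    exact (Finset.mem_filter.1 this).1
  · have : s(v,r) ∈ E.filter (fun e => v ∈ e) := by rw [hfil]; simp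
    exact (Finset.mem_filter.1 this).1

lemma remove_deg2 (V : Finset ℕ) (E : Finset (Sym2 ℕ)) (hL : LamanP V E)
    (hV : 4 ≤ V.card) (v : ℕ) (hv : v ∈ V) (hdeg : deg E v = 2) :
    ∃ u w, u ∈ V.erase v ∧ w ∈ V.erase v ∧ u ≠ w ∧
      LamanP (V.erase v) (E.filter (fun e => ¬ v ∈ e)) ∧
      E = insert s(v,u) (insert s(v,w) (E.filter (fun e => ¬ v ∈ e))) := by
  obtain ⟨hE, hcard, hsub⟩ := hL
  obtain ⟨e1, e2, h12, hfe⟩ := Finset.card_eq_two.1 hdeg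
  have m1 : e1 ∈ E.filter (fun e => v ∈ e) := by rw [hfe]; simp
  have m2 : e2 ∈ E.filter (fun e => v ∈ e) := by rw [hfe]; simp
  simp only [Finset.mem_filter] at m1 m2
  obtain ⟨he1, hv1⟩ := m1
  obtain ⟨he2, hv2⟩ := m2
  set u := Sym2.Mem.other hv1 with hu
  set w := Sym2.Mem.other hv2 with hw
  have hsp1 : s(v, u) = e1 := Sym2.other_spec hv1
  have hsp2 : s(v, w) = e2 := Sym2.other_spec hv2
  have huv : u ≠ v := by
    intro h
    exact (hE e1 he1).1 (by rw [← hsp1, h]; exact Sym2.diag_isDiag v)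
  have hwv : w ≠ v := by
    intro h
    exact (hE e2 he2).1 (by rw [← hsp2, h]; exact Sym2.diag_isDiag v)
  have huw : u ≠ w := by
    intro h; exact h12 (by rw [← hsp1, ← hsp2, h])
  have huV : u ∈ V.erase v :=
    Finset.mem_erase.2 ⟨huv, (hE e1 he1).2 _ (Sym2.other_mem hv1)⟩
  have hwV : w ∈ V.erase v :=
    Finset.mem_erase.2 ⟨hwv, (hE e2 he2).2 _ (Sym2.other_mem hv2)⟩
  have hsplit := Finset.card_filter_add_card_filter_not
    (s := E) (p := fun e => v ∈ e)
  refine ⟨u, w, huV, hwV, huw, ⟨?_, ?_, ?_⟩, ?_⟩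
  · intro e he
    obtain ⟨heE, hve⟩ := Finset.mem_filter.1 he
    refine ⟨(hE e heE).1, fun x hx => Finset.mem_erase.2
      ⟨fun h => hve (h ▸ hx), (hE e heE).2 x hx⟩⟩
  · rw [Finset.card_erase_of_mem hv]
    unfold deg at hdeg
    omega
  · intro S hS h2S
    have hSV : S ⊆ V := (Finset.mem_powerset.1 hS).trans (Finset.erase_subset _ _)
    have hfil : (E.filter (fun e => ¬ v ∈ e)).filter (fun e => ∀ x ∈ e, x ∈ S)
        = E.filter (fun e => ∀ x ∈ e, x ∈ S) := by
      rw [Finset.filter_filter]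
      apply Finset.filter_congr
      intro e _
      constructor
      · rintro ⟨_, h⟩; exact h
      · intro h
        refine ⟨fun hve => ?_, h⟩
        exact Finset.notMem_erase v V ((Finset.mem_powerset.1 hS) (h v hve))
    rw [hfil]
    exact hsub S (Finset.mem_powerset.2 hSV) h2S
  · ext e
    simp only [Finset.mem_insert, Finset.mem_filter]
    constructor
    · intro he
      by_cases hve : v ∈ e
      · have : e ∈ E.filter (fun e => v ∈ e) := Finset.mem_filter.2 ⟨he, hve⟩
        rw [hfe] at this
        simp only [Finset.mem_insert, Finset.mem_singleton] at this
        rcases this with rfl | rfl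
        · exact Or.inl hsp1.symm
        · exact Or.inr (Or.inl hsp2.symm)
      · exact Or.inr (Or.inr ⟨he, hve⟩)
    · rintro (rfl | rfl | ⟨he, _⟩)
      · rw [hsp1]; exact he1
      · rw [hsp2]; exact he2
      · exact he

lemma hi_small (n : ℕ) : n ≤ 5 → ∀ V E, V.card = n → 3 ≤ n → LamanP V E →
    HennebergI V E := by
  induction n using Nat.strong_induction_on with
  | _ n ih =>
    intro hn V E hcard h3 hL
    rcases eq_or_lt_of_le h3 with h3' | h4
    · -- base case : n = 3
      obtain ⟨a, b, c, hab, hac, hbc, hV⟩ := Finset.card_eq_three.1 (by omega : V.card = 3)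
      have hT : ({s(a,b), s(b,c), s(a,c)} : Finset (Sym2 ℕ)).card = 3 := by
        rw [Finset.card_insert_of_notMem, Finset.card_insert_of_notMem,
          Finset.card_singleton]
        · simp only [Finset.mem_singleton, Sym2.eq_iff]; omega
        · simp only [Finset.mem_insert, Finset.mem_singleton, Sym2.eq_iff]; omega
      have hsub : E ⊆ {s(a,b), s(b,c), s(a,c)} := by
        intro e he
        obtain ⟨hd, hend⟩ := hL.1 e he
        induction e using Sym2.ind with
        | _ x y =>
          have hx : x ∈ V := hend x (Sym2.mem_mk_left _ _)
          have hy : y ∈ V := hend y (Sym2.mem_mk_right _ _)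
          rw [hV] at hx hy
          simp only [Finset.mem_insert, Finset.mem_singleton] at hx hy
          have hxy : x ≠ y := fun h => hd (by simp [h, Sym2.isDiag_iff_proj_eq])
          simp only [Finset.mem_insert, Finset.mem_singleton, Sym2.eq_iff]
          omega
      have hEcard : E.card = 3 := by rw [hL.2.1, hcard]; omega
      have : E = {s(a,b), s(b,c), s(a,c)} :=
        Finset.eq_of_subset_of_card_le hsub (by omega)
      rw [hV, this]
      exact HennebergI.triangle a b c hab hac hbc
    · -- n = 4 or 5 : find a vertex of degree 2
      have hEcard : E.card = 2 * n - 3 := by rw [hL.2.1, hcard]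
      have hsum : ∑ x ∈ V, deg E x = 2 * (2 * n - 3) := by
        rw [sum_deg V E hL.1, hEcard]
      have hex : ∃ x ∈ V, deg E x ≤ 2 := by
        by_contra hno
        push_neg at hno
        have : ∀ x ∈ V, 3 ≤ deg E x := fun x hx => hno x hx
        have hle : V.card * 3 ≤ ∑ x ∈ V, deg E x := by
          calc V.card * 3 = ∑ _x ∈ V, 3 := by rw [Finset.sum_const, smul_eq_mul]
          _ ≤ ∑ x ∈ V, deg E x := Finset.sum_le_sum this
        rw [hsum, hcard] at hle
        omega
      obtain ⟨x, hxV, hx2⟩ := hex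
      have hx2' : deg E x = 2 :=
        le_antisymm hx2 (deg_ge_two V E hL (by omega) x hxV)
      obtain ⟨u, w, huV, hwV, huw, hL', hEeq⟩ :=
        remove_deg2 V E hL (by omega) x hxV hx2'
      have hih := ih (n-1) (by omega) (by omega) (V.erase x)
        (E.filter (fun e => ¬ x ∈ e))
        (by rw [Finset.card_erase_of_mem hxV, hcard]) (by omega) hL'
      have := HennebergI.stepI _ _ hih x u w (Finset.notMem_erase x V) huV hwV huw
      rwa [Finset.insert_erase hxV, ← hEeq] at this

lemma hi_edges {V : Finset ℕ} {E : Finset (Sym2 ℕ)} (h : HennebergI V E) :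
    ∀ e ∈ E, ∀ x ∈ e, x ∈ V := by
  induction h with
  | triangle a b c hab hac hbc =>
    intro e he x hx
    simp only [Finset.mem_insert, Finset.mem_singleton] at he
    rcases he with rfl | rfl | rfl <;>
      (rcases Sym2.mem_iff.1 hx with rfl | rfl <;> simp)
  | stepI V E hVE v u w hv hu hw huw ih =>
    intro e he x hx
    simp only [Finset.mem_insert] at he
    rcases he with rfl | rfl | he
    · rcases Sym2.mem_iff.1 hx with rfl | rfl
      · exact Finset.mem_insert_self _ _
      · exact Finset.mem_insert_of_mem hu
    · rcases Sym2.mem_iff.1 hx with rfl | rfl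
      · exact Finset.mem_insert_self _ _
      · exact Finset.mem_insert_of_mem hw
    · exact Finset.mem_insert_of_mem (ih e he x hx)

lemma hi_low_degree {V : Finset ℕ} {E : Finset (Sym2 ℕ)} (h : HennebergI V E) :
    ∃ v ∈ V, deg E v ≤ 2 := by
  induction h with
  | triangle a b c hab hac hbc =>
    refine ⟨a, by simp, ?_⟩
    have hsub : ({s(a,b), s(b,c), s(a,c)} : Finset (Sym2 ℕ)).filter
        (fun e => a ∈ e) ⊆ {s(a,b), s(a,c)} := by
      intro e he
      obtain ⟨he', ha⟩ := Finset.mem_filter.1 he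
      simp only [Finset.mem_insert, Finset.mem_singleton] at he' ⊢
      rcases he' with rfl | rfl | rfl
      · exact Or.inl rfl
      · rcases Sym2.mem_iff.1 ha with rfl | rfl <;> omega
      · exact Or.inr rfl
    calc deg _ a ≤ ({s(a,b), s(a,c)} : Finset (Sym2 ℕ)).card :=
          Finset.card_le_card hsub
      _ ≤ 2 := Finset.card_insert_le _ _ |>.trans (by simp)
  | stepI V E hVE v u w hv hu hw huw ih =>
    refine ⟨v, Finset.mem_insert_self _ _, ?_⟩
    have hEv : E.filter (fun e => v ∈ e) = ∅ := by
      apply Finset.filter_eq_empty_iff.2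
      intro e he hve
      exact hv (hi_edges hVE e he v hve)
    unfold deg
    rw [Finset.filter_insert, Finset.filter_insert]
    rw [if_pos (Sym2.mem_mk_left _ _), if_pos (Sym2.mem_mk_left _ _), hEv]
    exact (Finset.card_insert_le _ _).trans (by simp [Finset.card_insert_le])

lemma sym2_map_injOn {f : ℕ → ℕ} {V : Finset ℕ} (hinj : Set.InjOn f (V : Set ℕ))
    {x y u w : ℕ} (hx : x ∈ V) (hy : y ∈ V) (hu : u ∈ V) (hw : w ∈ V)
    (h : Sym2.map f s(x,y) = Sym2.map f s(u,w)) : s(x,y) = s(u,w) := by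
  rw [Sym2.map_pair_eq, Sym2.map_pair_eq, Sym2.eq_iff] at h
  rw [Sym2.eq_iff]
  rcases h with ⟨h1, h2⟩ | ⟨h1, h2⟩
  · exact Or.inl ⟨hinj hx hu h1, hinj hy hw h2⟩
  · exact Or.inr ⟨hinj hx hw h1, hinj hy hu h2⟩

lemma graphIso_of_image (V : Finset ℕ) (E : Finset (Sym2 ℕ)) (V₂ : Finset ℕ)
    (E₂ : Finset (Sym2 ℕ)) (f : ℕ → ℕ) (hbij : Set.BijOn f (V : Set ℕ) (V₂ : Set ℕ))
    (hend : ∀ e ∈ E, ∀ x ∈ e, x ∈ V)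
    (himg : E.image (Sym2.map f) = E₂) : GraphIso V E V₂ E₂ := by
  refine ⟨f, hbij, fun u hu w hw => ?_⟩
  constructor
  · intro h
    rw [← himg]
    exact Finset.mem_image.2 ⟨s(u,w), h, Sym2.map_pair_eq f u w⟩
  · intro h
    rw [← himg] at h
    obtain ⟨e, heE, hmap⟩ := Finset.mem_image.1 h
    induction e using Sym2.ind with
    | _ x y =>
      have hx : x ∈ V := hend _ heE x (Sym2.mem_mk_left _ _)
      have hy : y ∈ V := hend _ heE y (Sym2.mem_mk_right _ _)
      have : s(x,y) = s(u,w) := by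
        apply sym2_map_injOn hbij.injOn hx hy hu hw
        rw [hmap, Sym2.map_pair_eq]
      rwa [this] at heE

lemma bijOn_six (f : ℕ → ℕ) (a b c d e g : ℕ)
    (hab : a ≠ b) (hac : a ≠ c) (had : a ≠ d) (hae : a ≠ e) (hag : a ≠ g)
    (hbc : b ≠ c) (hbd : b ≠ d) (hbe : b ≠ e) (hbg : b ≠ g)
    (hcd : c ≠ d) (hce : c ≠ e) (hcg : c ≠ g)
    (hde : d ≠ e) (hdg : d ≠ g) (heg : e ≠ g)
    (ha : f a = 0) (hb : f b = 1) (hc : f c = 2) (hd : f d = 3) (he : f e = 4)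
    (hg : f g = 5) :
    Set.BijOn f (({a,b,c,d,e,g} : Finset ℕ) : Set ℕ)
      (({0,1,2,3,4,5} : Finset ℕ) : Set ℕ) := by
  refine ⟨?_, ?_, ?_⟩
  · intro x hx
    simp only [Finset.coe_insert, Set.mem_insert_iff, Finset.coe_singleton,
      Finset.mem_coe, Finset.mem_insert, Finset.mem_singleton] at hx ⊢
    rcases hx with rfl | rfl | rfl | rfl | rfl | rfl <;>
      simp [ha, hb, hc, hd, he, hg]
  · intro x hx y hy hxy
    simp only [Finset.coe_insert, Set.mem_insert_iff, Finset.coe_singleton,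
      Set.mem_singleton_iff] at hx hy
    rcases hx with rfl | rfl | rfl | rfl | rfl | rfl <;>
      rcases hy with rfl | rfl | rfl | rfl | rfl | rfl <;>
      simp_all
  · intro y hy
    simp only [Finset.coe_insert, Set.mem_insert_iff, Finset.coe_singleton,
      Set.mem_singleton_iff, Finset.mem_coe, Finset.mem_insert,
      Finset.mem_singleton] at hy
    rcases hy with rfl | rfl | rfl | rfl | rfl | rfl
    · exact ⟨a, by simp, ha⟩
    · exact ⟨b, by simp, hb⟩
    · exact ⟨c, by simp, hc⟩
    · exact ⟨d, by simp, hd⟩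
    · exact ⟨e, by simp, he⟩
    · exact ⟨g, by simp, hg⟩
lemma card4 {a b c d : ℕ} (h1 : a ≠ b) (h2 : a ≠ c) (h3 : a ≠ d) (h4 : b ≠ c)
    (h5 : b ≠ d) (h6 : c ≠ d) : ({a,b,c,d} : Finset ℕ).card = 4 := by
  repeat rw [Finset.card_insert_of_notMem (by
    simp only [Finset.mem_insert, Finset.mem_singleton]; omega)]
  rfl

lemma card6 {a b c d e g : ℕ}
    (hab : a ≠ b) (hac : a ≠ c) (had : a ≠ d) (hae : a ≠ e) (hag : a ≠ g)
    (hbc : b ≠ c) (hbd : b ≠ d) (hbe : b ≠ e) (hbg : b ≠ g)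
    (hcd : c ≠ d) (hce : c ≠ e) (hcg : c ≠ g)
    (hde : d ≠ e) (hdg : d ≠ g) (heg : e ≠ g) :
    ({a,b,c,d,e,g} : Finset ℕ).card = 6 := by
  repeat rw [Finset.card_insert_of_notMem (by
    simp only [Finset.mem_insert, Finset.mem_singleton]; omega)]
  rfl

lemma cardF6 {a b c d : ℕ} (h1 : a ≠ b) (h2 : a ≠ c) (h3 : a ≠ d) (h4 : b ≠ c)
    (h5 : b ≠ d) (h6 : c ≠ d) :
    ({s(a,b),s(b,c),s(a,c),s(a,d),s(b,d),s(c,d)} : Finset (Sym2 ℕ)).card = 6 := by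
  repeat rw [Finset.card_insert_of_notMem (by
    simp only [Finset.mem_insert, Finset.mem_singleton, Sym2.eq_iff]; omega)]
  rfl

lemma cardPrism {a b c d e g : ℕ}
    (hab : a ≠ b) (hac : a ≠ c) (had : a ≠ d) (hae : a ≠ e) (hag : a ≠ g)
    (hbc : b ≠ c) (hbd : b ≠ d) (hbe : b ≠ e) (hbg : b ≠ g)
    (hcd : c ≠ d) (hce : c ≠ e) (hcg : c ≠ g)
    (hde : d ≠ e) (hdg : d ≠ g) (heg : e ≠ g) :
    ({s(a,b),s(b,c),s(a,c),s(d,e),s(e,g),s(d,g),s(a,d),s(b,e),s(c,g)} :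
      Finset (Sym2 ℕ)).card = 9 := by
  repeat rw [Finset.card_insert_of_notMem (by
    simp only [Finset.mem_insert, Finset.mem_singleton, Sym2.eq_iff]; omega)]
  rfl

lemma cardK33 {a m n x y z : ℕ}
    (h1 : a ≠ m) (h2 : a ≠ n) (h3 : a ≠ x) (h4 : a ≠ y) (h5 : a ≠ z)
    (h6 : m ≠ n) (h7 : m ≠ x) (h8 : m ≠ y) (h9 : m ≠ z)
    (h10 : n ≠ x) (h11 : n ≠ y) (h12 : n ≠ z)
    (h13 : x ≠ y) (h14 : x ≠ z) (h15 : y ≠ z) :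
    ({s(a,x),s(a,y),s(a,z),s(m,x),s(m,y),s(m,z),s(n,x),s(n,y),s(n,z)} :
      Finset (Sym2 ℕ)).card = 9 := by
  repeat rw [Finset.card_insert_of_notMem (by
    simp only [Finset.mem_insert, Finset.mem_singleton, Sym2.eq_iff]; omega)]
  rfl

lemma ne_of_edge {V : Finset ℕ} {E : Finset (Sym2 ℕ)}
    (hE : ∀ e ∈ E, ¬ e.IsDiag ∧ ∀ v ∈ e, v ∈ V) {x y : ℕ} (h : s(x,y) ∈ E) :
    x ≠ y := by
  intro hxy
  exact (hE _ h).1 (by rw [hxy]; exact Sym2.diag_isDiag y)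

lemma ends_mem {V : Finset ℕ} {E : Finset (Sym2 ℕ)}
    (hE : ∀ e ∈ E, ¬ e.IsDiag ∧ ∀ v ∈ e, v ∈ V) {x y : ℕ} (h : s(x,y) ∈ E) :
    x ∈ V ∧ y ∈ V :=
  ⟨(hE _ h).2 x (Sym2.mem_mk_left _ _), (hE _ h).2 y (Sym2.mem_mk_right _ _)⟩

lemma edge_swap {E : Finset (Sym2 ℕ)} {x y : ℕ} (h : s(x,y) ∈ E) : s(y,x) ∈ E := by
  rwa [Sym2.eq_swap]

lemma mem_filter_ends {E : Finset (Sym2 ℕ)} {S : Finset ℕ} {x y : ℕ}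
    (hxy : s(x,y) ∈ E) (hx : x ∈ S) (hy : y ∈ S) :
    s(x,y) ∈ E.filter (fun e => ∀ v ∈ e, v ∈ S) := by
  refine Finset.mem_filter.2 ⟨hxy, ?_⟩
  intro v hv
  rcases Sym2.mem_iff.1 hv with rfl | rfl <;> assumption

-- arithmetic helpers (kept standalone so that `omega` stays cheap)
lemma third_exists {p q r a b : ℕ} (ha : a = p ∨ a = q ∨ a = r)
    (hb : b = p ∨ b = q ∨ b = r) (hab : a ≠ b)
    (hpq : p ≠ q) (hpr : p ≠ r) (hqr : q ≠ r) :
    (p ≠ a ∧ p ≠ b) ∨ (q ≠ a ∧ q ≠ b) ∨ (r ≠ a ∧ r ≠ b) := by omega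

lemma pick3 {x p q r b c d : ℕ} (hx : x = p ∨ x = q ∨ x = r)
    (hb : b = p ∨ b = q ∨ b = r) (hc : c = p ∨ c = q ∨ c = r)
    (hd : d = p ∨ d = q ∨ d = r) (hbc : b ≠ c) (hbd : b ≠ d) (hcd : c ≠ d) :
    x = b ∨ x = c ∨ x = d := by omega

lemma ne3_absurd {h b c d : ℕ} (hx : h = b ∨ h = c ∨ h = d)
    (h1 : h ≠ b) (h2 : h ≠ c) (h3 : h ≠ d) : False := by omega

lemma pick6 {x a b c d m n : ℕ}
    (hx : x = a ∨ x = b ∨ x = c ∨ x = d ∨ x = m ∨ x = n)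
    (h1 : x ≠ a) (h2 : x ≠ b) (h3 : x ≠ c) (h4 : x ≠ d) : x = m ∨ x = n := by omega

lemma pigeon2 {x1 x2 x3 m n : ℕ} (k1 : x1 = m ∨ x1 = n) (k2 : x2 = m ∨ x2 = n)
    (k3 : x3 = m ∨ x3 = n) (h12 : x1 ≠ x2) (h13 : x1 ≠ x3) (h23 : x2 ≠ x3) :
    False := by omega

lemma pick_cg {x a b c d m n t g : ℕ}
    (hx : x = a ∨ x = b ∨ x = c ∨ x = d ∨ x = m ∨ x = n)
    (h1 : x ≠ a) (h2 : x ≠ b) (h4 : x ≠ d) (h5 : x ≠ t)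
    (ht : t = m ∨ t = n) (hg : g = m ∨ g = n) (htg : t ≠ g) :
    x = c ∨ x = g := by omega

lemma shared_third (V : Finset ℕ) (E : Finset (Sym2 ℕ)) (hL : LamanP V E)
    (hcard : V.card = 6) (hcubic : ∀ v ∈ V, deg E v = 3)
    (a b c d : ℕ) (hab : s(a,b) ∈ E) (hbc : s(b,c) ∈ E) (hac : s(a,c) ∈ E)
    (hda : d ≠ a) (hdb : d ≠ b) (hdc : d ≠ c)
    (had : s(a,d) ∈ E) (hbd : s(b,d) ∈ E) : False := by
  obtain ⟨hE, hEcard, hsub⟩ := hL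
  have nab : a ≠ b := ne_of_edge hE hab
  have nbc : b ≠ c := ne_of_edge hE hbc
  have nac : a ≠ c := ne_of_edge hE hac
  have haV : a ∈ V := (ends_mem hE hab).1
  have hbV : b ∈ V := (ends_mem hE hab).2
  have hcV : c ∈ V := (ends_mem hE hac).2
  have hdV : d ∈ V := (ends_mem hE had).2
  -- c and d are not adjacent
  have hcdE : s(c,d) ∉ E := by
    intro hcd
    have hSsub : ({a,b,c,d} : Finset ℕ) ⊆ V := by
      intro x hx
      simp only [Finset.mem_insert, Finset.mem_singleton] at hx
      rcases hx with rfl | rfl | rfl | rfl <;> assumption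
    have hS4 : ({a,b,c,d} : Finset ℕ).card = 4 :=
      card4 nab nac (Ne.symm hda) nbc (Ne.symm hdb) (Ne.symm hdc)
    have hF6 : ({s(a,b),s(b,c),s(a,c),s(a,d),s(b,d),s(c,d)} : Finset (Sym2 ℕ))
        ⊆ E.filter (fun e => ∀ v ∈ e, v ∈ ({a,b,c,d} : Finset ℕ)) := by
      intro e he
      simp only [Finset.mem_insert, Finset.mem_singleton] at he
      rcases he with rfl | rfl | rfl | rfl | rfl | rfl <;>
        apply mem_filter_ends <;> first | assumption | simp
    have hb1 := hsub _ (Finset.mem_powerset.2 hSsub) (by rw [hS4]; omega)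
    have hb2 := Finset.card_le_card hF6
    rw [cardF6 nab nac (Ne.symm hda) nbc (Ne.symm hdb) (Ne.symm hdc)] at hb2
    rw [hS4] at hb1
    omega
  -- the third neighbour t of c
  obtain ⟨p, q, r, hpq, hpr, hqr, hpc, hqc, hrc, _, _, _, hfilc⟩ :=
    neighbors3 V E hE c (hcubic c hcV)
  have hac' : a = p ∨ a = q ∨ a = r := neighbor_mem hfilc hpc hqc hrc (edge_swap hac)
  have hbc' : b = p ∨ b = q ∨ b = r := neighbor_mem hfilc hpc hqc hrc (edge_swap hbc)
  obtain ⟨ecp, ecq, ecr⟩ := edge_of_filter3 hfilc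
  obtain ⟨t, htE, htc, hta, htb, ht3⟩ :
      ∃ t, s(c,t) ∈ E ∧ t ≠ c ∧ t ≠ a ∧ t ≠ b ∧ (t = p ∨ t = q ∨ t = r) := by
    rcases third_exists hac' hbc' nab hpq hpr hqr with ⟨h1, h2⟩ | ⟨h1, h2⟩ | ⟨h1, h2⟩
    · exact ⟨p, ecp, hpc, h1, h2, Or.inl rfl⟩
    · exact ⟨q, ecq, hqc, h1, h2, Or.inr (Or.inl rfl)⟩
    · exact ⟨r, ecr, hrc, h1, h2, Or.inr (Or.inr rfl)⟩
  have htV : t ∈ V := (ends_mem hE htE).2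
  have htd : t ≠ d := fun h => hcdE (h ▸ htE)
  -- the third neighbour g of d
  obtain ⟨p', q', r', hpq', hpr', hqr', hpd, hqd, hrd, _, _, _, hfild⟩ :=
    neighbors3 V E hE d (hcubic d hdV)
  have had' : a = p' ∨ a = q' ∨ a = r' :=
    neighbor_mem hfild hpd hqd hrd (edge_swap had)
  have hbd' : b = p' ∨ b = q' ∨ b = r' :=
    neighbor_mem hfild hpd hqd hrd (edge_swap hbd)
  obtain ⟨edp, edq, edr⟩ := edge_of_filter3 hfild
  obtain ⟨g, hgE, hgd, hga, hgb, hg3⟩ :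
      ∃ g, s(d,g) ∈ E ∧ g ≠ d ∧ g ≠ a ∧ g ≠ b ∧ (g = p' ∨ g = q' ∨ g = r') := by
    rcases third_exists had' hbd' nab hpq' hpr' hqr' with ⟨h1, h2⟩ | ⟨h1, h2⟩ | ⟨h1, h2⟩
    · exact ⟨p', edp, hpd, h1, h2, Or.inl rfl⟩
    · exact ⟨q', edq, hqd, h1, h2, Or.inr (Or.inl rfl)⟩
    · exact ⟨r', edr, hrd, h1, h2, Or.inr (Or.inr rfl)⟩
  have hgV : g ∈ V := (ends_mem hE hgE).2
  have hgc : g ≠ c := fun h => hcdE (edge_swap (h ▸ hgE))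
  -- full neighbourhoods of a and b
  obtain ⟨pa, qa, ra, h1a, h2a, h3a, h4a, h5a, h6a, _, _, _, hfila⟩ :=
    neighbors3 V E hE a (hcubic a haV)
  have fullA : ∀ x, s(a,x) ∈ E → x = b ∨ x = c ∨ x = d :=
    fun x hx => pick3 (neighbor_mem hfila h4a h5a h6a hx)
      (neighbor_mem hfila h4a h5a h6a hab)
      (neighbor_mem hfila h4a h5a h6a hac)
      (neighbor_mem hfila h4a h5a h6a had) nbc (Ne.symm hdb) (Ne.symm hdc)
  obtain ⟨pb, qb, rb, h1b, h2b, h3b, h4b, h5b, h6b, _, _, _, hfilb⟩ :=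
    neighbors3 V E hE b (hcubic b hbV)
  have fullB : ∀ x, s(b,x) ∈ E → x = a ∨ x = c ∨ x = d :=
    fun x hx => pick3 (neighbor_mem hfilb h4b h5b h6b hx)
      (neighbor_mem hfilb h4b h5b h6b (edge_swap hab))
      (neighbor_mem hfilb h4b h5b h6b hbc)
      (neighbor_mem hfilb h4b h5b h6b hbd) nac (Ne.symm hda) (Ne.symm hdc)
  have fullC : ∀ x, s(c,x) ∈ E → x = a ∨ x = b ∨ x = t :=
    fun x hx => pick3 (neighbor_mem hfilc hpc hqc hrc hx) hac' hbc' ht3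
      nab (Ne.symm hta) (Ne.symm htb)
  have fullD : ∀ x, s(d,x) ∈ E → x = a ∨ x = b ∨ x = g :=
    fun x hx => pick3 (neighbor_mem hfild hpd hqd hrd hx) had' hbd' hg3
      nab (Ne.symm hga) (Ne.symm hgb)
  -- the two remaining vertices m,n
  have hSsub : ({a,b,c,d} : Finset ℕ) ⊆ V := by
    intro x hx
    simp only [Finset.mem_insert, Finset.mem_singleton] at hx
    rcases hx with rfl | rfl | rfl | rfl <;> assumption
  have hW2 : (V \ {a,b,c,d}).card = 2 := by
    rw [Finset.card_sdiff_of_subset hSsub, hcard,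
      card4 nab nac (Ne.symm hda) nbc (Ne.symm hdb) (Ne.symm hdc)]
  obtain ⟨m, n, hmn, hWeq⟩ := Finset.card_eq_two.1 hW2
  have hmW : m ∈ V \ ({a,b,c,d} : Finset ℕ) := by rw [hWeq]; simp
  have hnW : n ∈ V \ ({a,b,c,d} : Finset ℕ) := by rw [hWeq]; simp
  obtain ⟨hmV, hm4⟩ := Finset.mem_sdiff.1 hmW
  obtain ⟨hnV, hn4⟩ := Finset.mem_sdiff.1 hnW
  simp only [Finset.mem_insert, Finset.mem_singleton, not_or] at hm4 hn4
  obtain ⟨hma, hmb, hmc, hmd⟩ := hm4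
  obtain ⟨hna, hnb, hnc, hnd⟩ := hn4
  -- enumeration of V
  have hVset : ({a,b,c,d,m,n} : Finset ℕ) = V := by
    apply Finset.eq_of_subset_of_card_le
    · intro x hx
      simp only [Finset.mem_insert, Finset.mem_singleton] at hx
      rcases hx with rfl | rfl | rfl | rfl | rfl | rfl <;> assumption
    · rw [hcard, card6 nab nac (Ne.symm hda) (Ne.symm hma) (Ne.symm hna)
        nbc (Ne.symm hdb) (Ne.symm hmb) (Ne.symm hnb)
        (Ne.symm hdc) (Ne.symm hmc) (Ne.symm hnc) (Ne.symm hmd) (Ne.symm hnd) hmn]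
  have hVmem : ∀ x ∈ V, x = a ∨ x = b ∨ x = c ∨ x = d ∨ x = m ∨ x = n := by
    intro x hx
    rw [← hVset] at hx
    simpa using hx
  have htmn : t = m ∨ t = n := pick6 (hVmem t htV) hta htb htc htd
  have hgmn : g = m ∨ g = n := pick6 (hVmem g hgV) hga hgb hgc hgd
  by_cases htg : t = g
  · -- t = g : the other remaining vertex has no possible neighbours
    obtain ⟨h, hhV, hha, hhb, hhc, hhd, hht, hhmn⟩ :
        ∃ h, h ∈ V ∧ h ≠ a ∧ h ≠ b ∧ h ≠ c ∧ h ≠ d ∧ h ≠ t ∧ (h = m ∨ h = n) := by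
      rcases htmn with rfl | rfl
      · exact ⟨n, hnV, hna, hnb, hnc, hnd, Ne.symm hmn, Or.inr rfl⟩
      · exact ⟨m, hmV, hma, hmb, hmc, hmd, hmn, Or.inl rfl⟩
    obtain ⟨x1, x2, x3, hx12, hx13, hx23, hx1h, hx2h, hx3h, hx1V, hx2V, hx3V, hfilh⟩ :=
      neighbors3 V E hE h (hcubic h hhV)
    obtain ⟨eh1, eh2, eh3⟩ := edge_of_filter3 hfilh
    have key : ∀ x, s(h,x) ∈ E → x ≠ h → x = m ∨ x = n := by
      intro x hx hxh
      have hxV : x ∈ V := (ends_mem hE hx).2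
      have hxa : x ≠ a := by
        rintro rfl
        exact ne3_absurd (fullA h (edge_swap hx)) hhb hhc hhd
      have hxb : x ≠ b := by
        rintro rfl
        exact ne3_absurd (fullB h (edge_swap hx)) hha hhc hhd
      have hxc : x ≠ c := by
        rintro rfl
        exact ne3_absurd (fullC h (edge_swap hx)) hha hhb hht
      have hxd : x ≠ d := by
        rintro rfl
        exact ne3_absurd (fullD h (edge_swap hx)) hha hhb (htg ▸ hht)
      exact pick6 (hVmem x hxV) hxa hxb hxc hxd
    exact pigeon2 (key x1 eh1 hx1h) (key x2 eh2 hx2h) (key x3 eh3 hx3h)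
      hx12 hx13 hx23
  · -- t ≠ g : t has too few possible neighbours
    obtain ⟨x1, x2, x3, hx12, hx13, hx23, hx1t, hx2t, hx3t, hx1V, hx2V, hx3V, hfilt⟩ :=
      neighbors3 V E hE t (hcubic t htV)
    obtain ⟨et1, et2, et3⟩ := edge_of_filter3 hfilt
    have key : ∀ x, s(t,x) ∈ E → x ≠ t → x = c ∨ x = g := by
      intro x hx hxt
      have hxV : x ∈ V := (ends_mem hE hx).2
      have hxa : x ≠ a := by
        rintro rfl
        exact ne3_absurd (fullA t (edge_swap hx)) htb htc htd
      have hxb : x ≠ b := by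
        rintro rfl
        exact ne3_absurd (fullB t (edge_swap hx)) hta htc htd
      have hxd : x ≠ d := by
        rintro rfl
        exact ne3_absurd (fullD t (edge_swap hx)) hta htb htg
      exact pick_cg (hVmem x hxV) hxa hxb hxd hxt htmn hgmn htg
    exact pigeon2 (key x1 et1 hx1t) (key x2 et2 hx2t) (key x3 et3 hx3t)
      hx12 hx13 hx23

lemma pick3of6 {x a b c d m n : ℕ}
    (hx : x = a ∨ x = b ∨ x = c ∨ x = d ∨ x = m ∨ x = n)
    (h2 : x ≠ b) (h3 : x ≠ c) (h4 : x ≠ d) : x = a ∨ x = m ∨ x = n := by omega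

lemma pick3of6b {x a b c d e f : ℕ}
    (hx : x = a ∨ x = b ∨ x = c ∨ x = d ∨ x = e ∨ x = f)
    (h1 : x ≠ a) (h3 : x ≠ c) (h5 : x ≠ e) : x = b ∨ x = d ∨ x = f := by omega

lemma pick3of6c {x a b c d e f : ℕ}
    (hx : x = a ∨ x = b ∨ x = c ∨ x = d ∨ x = e ∨ x = f)
    (h4 : x ≠ d) (h5 : x ≠ e) (h6 : x ≠ f) : x = a ∨ x = b ∨ x = c := by omega

lemma cover3 {x1 x2 x3 a e f : ℕ}
    (k1 : x1 = a ∨ x1 = e ∨ x1 = f) (k2 : x2 = a ∨ x2 = e ∨ x2 = f)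
    (k3 : x3 = a ∨ x3 = e ∨ x3 = f)
    (h12 : x1 ≠ x2) (h13 : x1 ≠ x3) (h23 : x2 ≠ x3) :
    (e = x1 ∨ e = x2 ∨ e = x3) ∧ (f = x1 ∨ f = x2 ∨ f = x3) := by omega

lemma classify (V : Finset ℕ) (E : Finset (Sym2 ℕ)) (hL : LamanP V E)
    (hcard : V.card = 6) (hcubic : ∀ v ∈ V, deg E v = 3) :
    GraphIso V E {0,1,2,3,4,5} desarguesE ∨ GraphIso V E {0,1,2,3,4,5} k33E := by
  have hE := hL.1
  have hEcard : E.card = 9 := by rw [hL.2.1, hcard]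
  by_cases htri : ∃ x y z, s(x,y) ∈ E ∧ s(y,z) ∈ E ∧ s(x,z) ∈ E
  · left
    obtain ⟨a, b, c, hab, hbc, hac⟩ := htri
    have nab : a ≠ b := ne_of_edge hE hab
    have nbc : b ≠ c := ne_of_edge hE hbc
    have nac : a ≠ c := ne_of_edge hE hac
    have haV : a ∈ V := (ends_mem hE hab).1
    have hbV : b ∈ V := (ends_mem hE hab).2
    have hcV : c ∈ V := (ends_mem hE hac).2
    -- third neighbours d (of a), e (of b), f (of c)
    obtain ⟨pa, qa, ra, h1a, h2a, h3a, h4a, h5a, h6a, _, _, _, hfila⟩ :=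
      neighbors3 V E hE a (hcubic a haV)
    have hba' : b = pa ∨ b = qa ∨ b = ra := neighbor_mem hfila h4a h5a h6a hab
    have hca' : c = pa ∨ c = qa ∨ c = ra := neighbor_mem hfila h4a h5a h6a hac
    obtain ⟨ea1, ea2, ea3⟩ := edge_of_filter3 hfila
    obtain ⟨d, hadE, hda, hdb, hdc, hd3⟩ :
        ∃ d, s(a,d) ∈ E ∧ d ≠ a ∧ d ≠ b ∧ d ≠ c ∧ (d = pa ∨ d = qa ∨ d = ra) := by
      rcases third_exists hba' hca' nbc h1a h2a h3a with ⟨h1, h2⟩ | ⟨h1, h2⟩ | ⟨h1, h2⟩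
      · exact ⟨pa, ea1, h4a, h1, h2, Or.inl rfl⟩
      · exact ⟨qa, ea2, h5a, h1, h2, Or.inr (Or.inl rfl)⟩
      · exact ⟨ra, ea3, h6a, h1, h2, Or.inr (Or.inr rfl)⟩
    obtain ⟨pb, qb, rb, h1b, h2b, h3b, h4b, h5b, h6b, _, _, _, hfilb⟩ :=
      neighbors3 V E hE b (hcubic b hbV)
    have hab' : a = pb ∨ a = qb ∨ a = rb :=
      neighbor_mem hfilb h4b h5b h6b (edge_swap hab)
    have hcb' : c = pb ∨ c = qb ∨ c = rb := neighbor_mem hfilb h4b h5b h6b hbc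
    obtain ⟨eb1, eb2, eb3⟩ := edge_of_filter3 hfilb
    obtain ⟨e, hbeE, heb, hea, hec, he3⟩ :
        ∃ e, s(b,e) ∈ E ∧ e ≠ b ∧ e ≠ a ∧ e ≠ c ∧ (e = pb ∨ e = qb ∨ e = rb) := by
      rcases third_exists hab' hcb' nac h1b h2b h3b with ⟨h1, h2⟩ | ⟨h1, h2⟩ | ⟨h1, h2⟩
      · exact ⟨pb, eb1, h4b, h1, h2, Or.inl rfl⟩
      · exact ⟨qb, eb2, h5b, h1, h2, Or.inr (Or.inl rfl)⟩
      · exact ⟨rb, eb3, h6b, h1, h2, Or.inr (Or.inr rfl)⟩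
    obtain ⟨pc, qc, rc, h1c, h2c, h3c, h4c, h5c, h6c, _, _, _, hfilc⟩ :=
      neighbors3 V E hE c (hcubic c hcV)
    have hac' : a = pc ∨ a = qc ∨ a = rc :=
      neighbor_mem hfilc h4c h5c h6c (edge_swap hac)
    have hbc' : b = pc ∨ b = qc ∨ b = rc :=
      neighbor_mem hfilc h4c h5c h6c (edge_swap hbc)
    obtain ⟨ec1, ec2, ec3⟩ := edge_of_filter3 hfilc
    obtain ⟨f, hcfE, hfc, hfa, hfb, hf3⟩ :
        ∃ f, s(c,f) ∈ E ∧ f ≠ c ∧ f ≠ a ∧ f ≠ b ∧ (f = pc ∨ f = qc ∨ f = rc) := by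
      rcases third_exists hac' hbc' nab h1c h2c h3c with ⟨h1, h2⟩ | ⟨h1, h2⟩ | ⟨h1, h2⟩
      · exact ⟨pc, ec1, h4c, h1, h2, Or.inl rfl⟩
      · exact ⟨qc, ec2, h5c, h1, h2, Or.inr (Or.inl rfl)⟩
      · exact ⟨rc, ec3, h6c, h1, h2, Or.inr (Or.inr rfl)⟩
    have hdV : d ∈ V := (ends_mem hE hadE).2
    have heV : e ∈ V := (ends_mem hE hbeE).2
    have hfV : f ∈ V := (ends_mem hE hcfE).2
    -- d, e, f are pairwise distinct
    have hde : d ≠ e := by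
      rintro rfl
      exact shared_third V E ⟨hE, hL.2.1, hL.2.2⟩ hcard hcubic a b c d hab hbc hac
        hda hdb hdc hadE hbeE
    have hdf : d ≠ f := by
      rintro rfl
      exact shared_third V E ⟨hE, hL.2.1, hL.2.2⟩ hcard hcubic a c b d hac
        (edge_swap hbc) hab hda hdc hdb hadE hcfE
    have hef : e ≠ f := by
      rintro rfl
      exact shared_third V E ⟨hE, hL.2.1, hL.2.2⟩ hcard hcubic b c a e hbc
        (edge_swap hac) (edge_swap hab) heb hec hea hbeE hcfE
    -- V = {a,b,c,d,e,f}
    have hVset : ({a,b,c,d,e,f} : Finset ℕ) = V := by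
      apply Finset.eq_of_subset_of_card_le
      · intro x hx
        simp only [Finset.mem_insert, Finset.mem_singleton] at hx
        rcases hx with rfl | rfl | rfl | rfl | rfl | rfl <;> assumption
      · rw [hcard, card6 nab nac (Ne.symm hda) (Ne.symm hea) (Ne.symm hfa)
          nbc (Ne.symm hdb) (Ne.symm heb) (Ne.symm hfb)
          (Ne.symm hdc) (Ne.symm hec) (Ne.symm hfc) hde hdf hef]
    have hVmem : ∀ x ∈ V, x = a ∨ x = b ∨ x = c ∨ x = d ∨ x = e ∨ x = f := by
      intro x hx
      rw [← hVset] at hx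
      simpa using hx
    -- full neighbourhoods of a, b, c
    have fullA : ∀ x, s(a,x) ∈ E → x = b ∨ x = c ∨ x = d :=
      fun x hx => pick3 (neighbor_mem hfila h4a h5a h6a hx) hba' hca' hd3
        nbc (Ne.symm hdb) (Ne.symm hdc)
    have fullB : ∀ x, s(b,x) ∈ E → x = a ∨ x = c ∨ x = e :=
      fun x hx => pick3 (neighbor_mem hfilb h4b h5b h6b hx) hab' hcb' he3
        nac (Ne.symm hea) (Ne.symm hec)
    have fullC : ∀ x, s(c,x) ∈ E → x = a ∨ x = b ∨ x = f :=
      fun x hx => pick3 (neighbor_mem hfilc h4c h5c h6c hx) hac' hbc' hf3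
        nab (Ne.symm hfa) (Ne.symm hfb)
    -- neighbourhood of d is {a, e, f}
    obtain ⟨x1, x2, x3, hx12, hx13, hx23, hx1d, hx2d, hx3d, hx1V, hx2V, hx3V, hfild⟩ :=
      neighbors3 V E hE d (hcubic d hdV)
    obtain ⟨ed1, ed2, ed3⟩ := edge_of_filter3 hfild
    have keyd : ∀ x, s(d,x) ∈ E → x ≠ d → x = a ∨ x = e ∨ x = f := by
      intro x hx hxd
      have hxb : x ≠ b := by
        rintro rfl
        exact ne3_absurd (fullB d (edge_swap hx)) hda hdc hde
      have hxc : x ≠ c := by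
        rintro rfl
        exact ne3_absurd (fullC d (edge_swap hx)) hda hdb hdf
      exact pick3of6 (hVmem x (ends_mem hE hx).2) hxb hxc hxd
    obtain ⟨hcov_e, hcov_f⟩ := cover3 (keyd x1 ed1 hx1d) (keyd x2 ed2 hx2d)
      (keyd x3 ed3 hx3d) hx12 hx13 hx23
    have hdeE : s(d,e) ∈ E := by
      rcases hcov_e with h | h | h <;> rw [h] <;> assumption
    have hdfE : s(d,f) ∈ E := by
      rcases hcov_f with h | h | h <;> rw [h] <;> assumption
    -- neighbourhood of e contains f
    obtain ⟨y1, y2, y3, hy12, hy13, hy23, hy1e, hy2e, hy3e, hy1V, hy2V, hy3V, hfile⟩ :=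
      neighbors3 V E hE e (hcubic e heV)
    obtain ⟨ee1, ee2, ee3⟩ := edge_of_filter3 hfile
    have keye : ∀ x, s(e,x) ∈ E → x ≠ e → x = b ∨ x = d ∨ x = f := by
      intro x hx hxe
      have hxa : x ≠ a := by
        rintro rfl
        exact ne3_absurd (fullA e (edge_swap hx)) heb hec (Ne.symm hde)
      have hxc : x ≠ c := by
        rintro rfl
        exact ne3_absurd (fullC e (edge_swap hx)) hea heb hef
      exact pick3of6b (hVmem x (ends_mem hE hx).2) hxa hxc hxe
    obtain ⟨_, hcov_f2⟩ := cover3 (keye y1 ee1 hy1e) (keye y2 ee2 hy2e)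
      (keye y3 ee3 hy3e) hy12 hy13 hy23
    have hefE : s(e,f) ∈ E := by
      rcases hcov_f2 with h | h | h <;> rw [h] <;> assumption
    -- E is exactly the prism
    have hFE : ({s(a,b),s(b,c),s(a,c),s(d,e),s(e,f),s(d,f),s(a,d),s(b,e),s(c,f)} :
        Finset (Sym2 ℕ)) = E := by
      apply Finset.eq_of_subset_of_card_le
      · intro x hx
        simp only [Finset.mem_insert, Finset.mem_singleton] at hx
        rcases hx with rfl|rfl|rfl|rfl|rfl|rfl|rfl|rfl|rfl <;> assumption
      · rw [hEcard, cardPrism nab nac (Ne.symm hda) (Ne.symm hea) (Ne.symm hfa)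
          nbc (Ne.symm hdb) (Ne.symm heb) (Ne.symm hfb)
          (Ne.symm hdc) (Ne.symm hec) (Ne.symm hfc) hde hdf hef]
    -- construct the isomorphism
    set f₀ : ℕ → ℕ := fun x =>
      if x = a then 0 else if x = b then 1 else if x = c then 2
      else if x = d then 3 else if x = e then 4 else 5 with hf₀
    have hva : f₀ a = 0 := by simp [hf₀]
    have hvb : f₀ b = 1 := by simp [hf₀, Ne.symm nab]
    have hvc : f₀ c = 2 := by simp [hf₀, Ne.symm nac, Ne.symm nbc]
    have hvd : f₀ d = 3 := by simp [hf₀, hda, hdb, hdc]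
    have hve : f₀ e = 4 := by simp [hf₀, hea, heb, hec, Ne.symm hde]
    have hvf : f₀ f = 5 := by simp [hf₀, hfa, hfb, hfc, Ne.symm hdf, Ne.symm hef]
    apply graphIso_of_image V E _ _ f₀
    · rw [← hVset]
      exact bijOn_six f₀ a b c d e f nab nac (Ne.symm hda) (Ne.symm hea) (Ne.symm hfa)
        nbc (Ne.symm hdb) (Ne.symm heb) (Ne.symm hfb)
        (Ne.symm hdc) (Ne.symm hec) (Ne.symm hfc) hde hdf hef
        hva hvb hvc hvd hve hvf
    · exact fun e he => (hE e he).2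
    · rw [← hFE]
      simp only [Finset.image_insert, Finset.image_singleton, Sym2.map_pair_eq,
        hva, hvb, hvc, hvd, hve, hvf]
      rfl
  · right
    -- triangle-free case
    have hVne : V.Nonempty := Finset.card_pos.1 (by omega)
    obtain ⟨a, haV⟩ := hVne
    obtain ⟨x, y, z, hxy, hxz, hyz, hxa, hya, hza, hxV, hyV, hzV, hfila⟩ :=
      neighbors3 V E hE a (hcubic a haV)
    obtain ⟨haxE, hayE, hazE⟩ := edge_of_filter3 hfila
    have hnt : ∀ u v w, s(u,v) ∈ E → s(v,w) ∈ E → s(u,w) ∈ E → False := by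
      intro u v w h1 h2 h3
      exact htri ⟨u, v, w, h1, h2, h3⟩
    -- the two remaining vertices
    have hSsub : ({a,x,y,z} : Finset ℕ) ⊆ V := by
      intro u hu
      simp only [Finset.mem_insert, Finset.mem_singleton] at hu
      rcases hu with rfl | rfl | rfl | rfl <;> assumption
    have hW2 : (V \ {a,x,y,z}).card = 2 := by
      rw [Finset.card_sdiff_of_subset hSsub, hcard,
        card4 (Ne.symm hxa) (Ne.symm hya) (Ne.symm hza) hxy hxz hyz]
    obtain ⟨m, n, hmn, hWeq⟩ := Finset.card_eq_two.1 hW2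
    have hmW : m ∈ V \ ({a,x,y,z} : Finset ℕ) := by rw [hWeq]; simp
    have hnW : n ∈ V \ ({a,x,y,z} : Finset ℕ) := by rw [hWeq]; simp
    obtain ⟨hmV, hm4⟩ := Finset.mem_sdiff.1 hmW
    obtain ⟨hnV, hn4⟩ := Finset.mem_sdiff.1 hnW
    simp only [Finset.mem_insert, Finset.mem_singleton, not_or] at hm4 hn4
    obtain ⟨hma, hmx, hmy, hmz⟩ := hm4
    obtain ⟨hna, hnx, hny, hnz⟩ := hn4
    have hVset : ({a,m,n,x,y,z} : Finset ℕ) = V := by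
      apply Finset.eq_of_subset_of_card_le
      · intro u hu
        simp only [Finset.mem_insert, Finset.mem_singleton] at hu
        rcases hu with rfl | rfl | rfl | rfl | rfl | rfl <;> assumption
      · rw [hcard, card6 (Ne.symm hma) (Ne.symm hna) (Ne.symm hxa) (Ne.symm hya)
          (Ne.symm hza) hmn hmx hmy hmz hnx hny hnz hxy hxz hyz]
    have hVmem : ∀ u ∈ V, u = a ∨ u = m ∨ u = n ∨ u = x ∨ u = y ∨ u = z := by
      intro u hu
      rw [← hVset] at hu
      simpa using hu
    -- each neighbour of `a` is adjacent to both m and n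
    have adjw : ∀ w, s(a,w) ∈ E → s(w,m) ∈ E ∧ s(w,n) ∈ E := by
      intro w hawE
      have hwV : w ∈ V := (ends_mem hE hawE).2
      obtain ⟨u1, u2, u3, hu12, hu13, hu23, hu1w, hu2w, hu3w, hu1V, hu2V, hu3V, hfilw⟩ :=
        neighbors3 V E hE w (hcubic w hwV)
      obtain ⟨ew1, ew2, ew3⟩ := edge_of_filter3 hfilw
      have keyw : ∀ u, s(w,u) ∈ E → u ≠ w → u = a ∨ u = m ∨ u = n := by
        intro u hu huw
        have hux : u ≠ x := by
          intro h
          rcases eq_or_ne w x with h2 | h2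
          · exact huw (by rw [h, ← h2])
          · exact hnt a w x hawE (by rwa [← h]) haxE
        have huy : u ≠ y := by
          intro h
          rcases eq_or_ne w y with h2 | h2
          · exact huw (by rw [h, ← h2])
          · exact hnt a w y hawE (by rwa [← h]) hayE
        have huz : u ≠ z := by
          intro h
          rcases eq_or_ne w z with h2 | h2
          · exact huw (by rw [h, ← h2])
          · exact hnt a w z hawE (by rwa [← h]) hazE
        exact pick3of6c (hVmem u (ends_mem hE hu).2) hux huy huz
      obtain ⟨hcm, hcn⟩ := cover3 (keyw u1 ew1 hu1w) (keyw u2 ew2 hu2w)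
        (keyw u3 ew3 hu3w) hu12 hu13 hu23
      constructor
      · rcases hcm with h | h | h <;> rw [h] <;> assumption
      · rcases hcn with h | h | h <;> rw [h] <;> assumption
    obtain ⟨hxmE, hxnE⟩ := adjw x haxE
    obtain ⟨hymE, hynE⟩ := adjw y hayE
    obtain ⟨hzmE, hznE⟩ := adjw z hazE
    -- E is exactly K33
    have hFE : ({s(a,x),s(a,y),s(a,z),s(m,x),s(m,y),s(m,z),s(n,x),s(n,y),s(n,z)} :
        Finset (Sym2 ℕ)) = E := by
      apply Finset.eq_of_subset_of_card_le
      · intro u hu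
        simp only [Finset.mem_insert, Finset.mem_singleton] at hu
        rcases hu with rfl|rfl|rfl|rfl|rfl|rfl|rfl|rfl|rfl <;>
          first | assumption | (apply edge_swap; assumption)
      · rw [hEcard, cardK33 (Ne.symm hma) (Ne.symm hna) (Ne.symm hxa) (Ne.symm hya)
          (Ne.symm hza) hmn hmx hmy hmz hnx hny hnz hxy hxz hyz]
    -- construct the isomorphism
    set f₀ : ℕ → ℕ := fun u =>
      if u = a then 0 else if u = m then 1 else if u = n then 2
      else if u = x then 3 else if u = y then 4 else 5 with hf₀
    have hva : f₀ a = 0 := by simp [hf₀]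
    have hvm : f₀ m = 1 := by simp [hf₀, hma]
    have hvn : f₀ n = 2 := by simp [hf₀, hna, Ne.symm hmn]
    have hvx : f₀ x = 3 := by simp [hf₀, hxa, Ne.symm hmx, Ne.symm hnx]
    have hvy : f₀ y = 4 := by simp [hf₀, hya, Ne.symm hmy, Ne.symm hny, Ne.symm hxy]
    have hvz : f₀ z = 5 := by simp [hf₀, hza, Ne.symm hmz, Ne.symm hnz, Ne.symm hxz, Ne.symm hyz]
    apply graphIso_of_image V E _ _ f₀
    · rw [← hVset]
      exact bijOn_six f₀ a m n x y z (Ne.symm hma) (Ne.symm hna) (Ne.symm hxa)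
        (Ne.symm hya) (Ne.symm hza) hmn hmx hmy hmz hnx hny hnz hxy hxz hyz
        hva hvm hvn hvx hvy hvz
    · exact fun e he => (hE e he).2
    · rw [← hFE]
      simp only [Finset.image_insert, Finset.image_singleton, Sym2.map_pair_eq,
        hva, hvm, hvn, hvx, hvy, hvz]
      rfl

lemma notk33tri : ∀ x ∈ ({0,1,2,3,4,5} : Finset ℕ), ∀ y ∈ ({0,1,2,3,4,5} : Finset ℕ),
    ∀ z ∈ ({0,1,2,3,4,5} : Finset ℕ),
    ¬(s(x,y) ∈ k33E ∧ s(y,z) ∈ k33E ∧ s(x,z) ∈ k33E) := by decide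

/-- up to graph isomorphism there are exactly two Laman graphs on
`6` vertices that are not Henneberg I constructible, namely the Desargues graph
and `K_{3,3}`. -/
theorem laman_six_vertices_classification :
    (∀ V E, V.card = 6 → Laman V E → ¬ HennebergI V E →
      (GraphIso V E {0,1,2,3,4,5} desarguesE ∨ GraphIso V E {0,1,2,3,4,5} k33E)) ∧
    Laman {0,1,2,3,4,5} desarguesE ∧ ¬ HennebergI {0,1,2,3,4,5} desarguesE ∧
    Laman {0,1,2,3,4,5} k33E ∧ ¬ HennebergI {0,1,2,3,4,5} k33E ∧
    ¬ GraphIso {0,1,2,3,4,5} desarguesE {0,1,2,3,4,5} k33E := by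
  refine ⟨?_, ?_, ?_, ?_, ?_, ?_⟩
  · -- classification
    intro V E hcard hL hHI
    rw [laman_iff] at hL
    have hno2 : ∀ v ∈ V, deg E v ≠ 2 := by
      intro v hv h2
      obtain ⟨u, w, huV, hwV, huw, hL', hEeq⟩ :=
        remove_deg2 V E hL (by omega) v hv h2
      have h5 := hi_small 5 (le_refl _) (V.erase v) _
        (by rw [Finset.card_erase_of_mem hv, hcard]) (by omega) hL'
      have := HennebergI.stepI _ _ h5 v u w (Finset.notMem_erase v V) huV hwV huw
      rw [Finset.insert_erase hv, ← hEeq] at this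
      exact hHI this
    have hge3 : ∀ v ∈ V, 3 ≤ deg E v := by
      intro v hv
      have h1 := deg_ge_two V E hL (by omega) v hv
      have h2 := hno2 v hv
      omega
    have hsum : ∑ v ∈ V, deg E v = 18 := by
      rw [sum_deg V E hL.1, hL.2.1, hcard]
    have hcubic : ∀ v ∈ V, deg E v = 3 := by
      intro v hv
      by_contra hne
      have h4 : 4 ≤ deg E v := by
        have := hge3 v hv
        omega
      have hsplit : deg E v + ∑ x ∈ V.erase v, deg E x = 18 := by
        rw [Finset.add_sum_erase V _ hv, hsum]
      have hlow : 3 * 5 ≤ ∑ x ∈ V.erase v, deg E x := by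
        have : ∑ _x ∈ V.erase v, 3 ≤ ∑ x ∈ V.erase v, deg E x :=
          Finset.sum_le_sum (fun x hx => hge3 x (Finset.mem_of_mem_erase hx))
        rwa [Finset.sum_const, Finset.card_erase_of_mem hv, hcard, smul_eq_mul,
          mul_comm] at this
      omega
    exact classify V E hL hcard hcubic
  · -- prism is Laman
    rw [laman_iff]
    unfold LamanP
    refine ⟨by decide, by decide, by decide⟩
  · -- prism is not Henneberg I
    intro h
    obtain ⟨v, hvV, hd⟩ := hi_low_degree h
    have hv6 : v = 0 ∨ v = 1 ∨ v = 2 ∨ v = 3 ∨ v = 4 ∨ v = 5 := by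
      simpa using hvV
    unfold deg at hd
    rcases hv6 with rfl | rfl | rfl | rfl | rfl | rfl <;> revert hd <;> decide
  · -- K33 is Laman
    rw [laman_iff]
    unfold LamanP
    refine ⟨by decide, by decide, by decide⟩
  · -- K33 is not Henneberg I
    intro h
    obtain ⟨v, hvV, hd⟩ := hi_low_degree h
    have hv6 : v = 0 ∨ v = 1 ∨ v = 2 ∨ v = 3 ∨ v = 4 ∨ v = 5 := by
      simpa using hvV
    unfold deg at hd
    rcases hv6 with rfl | rfl | rfl | rfl | rfl | rfl <;> revert hd <;> decide
  · -- prism ≇ K33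
    rintro ⟨f, hbij, hiff⟩
    have h0 : (0:ℕ) ∈ ({0,1,2,3,4,5} : Finset ℕ) := by decide
    have h1 : (1:ℕ) ∈ ({0,1,2,3,4,5} : Finset ℕ) := by decide
    have h2 : (2:ℕ) ∈ ({0,1,2,3,4,5} : Finset ℕ) := by decide
    have e01 : s(f 0, f 1) ∈ k33E := (hiff 0 h0 1 h1).1 (by decide)
    have e12 : s(f 1, f 2) ∈ k33E := (hiff 1 h1 2 h2).1 (by decide)
    have e02 : s(f 0, f 2) ∈ k33E := (hiff 0 h0 2 h2).1 (by decide)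
    have hf0 : f 0 ∈ ({0,1,2,3,4,5} : Finset ℕ) :=
      Finset.mem_coe.1 (hbij.mapsTo (Finset.mem_coe.2 h0))
    have hf1 : f 1 ∈ ({0,1,2,3,4,5} : Finset ℕ) :=
      Finset.mem_coe.1 (hbij.mapsTo (Finset.mem_coe.2 h1))
    have hf2 : f 2 ∈ ({0,1,2,3,4,5} : Finset ℕ) :=
      Finset.mem_coe.1 (hbij.mapsTo (Finset.mem_coe.2 h2))
    exact notk33tri _ hf0 _ hf1 _ hf2 ⟨e01, e12, e02⟩
end
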